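/- arXiv:1111.1320 — 3 statements merged into one kernel-verified Lean document; each statement's English description precedes it below -/
import Mathlib

section
/- Regard left multiplication by the variables x_j and the odd divided difference operators ∂_i as additive endomorphisms of OPol_a, with products meaning composition of operators. Then the following relations hold in End(OPol_a): ∂_i∘∂_i = 0 for 1 ≤ i ≤ a−1; ∂_i∘∂_{i+1}∘∂_i = ∂_{i+1}∘∂_i∘∂_{i+1} for 1 ≤ i ≤ a−2; x_i∘∂_i + ∂_i∘x_{i+1} = 1 and ∂_i∘x_i + x_{i+1}∘∂_i = 1 for 1 ≤ i ≤ a−1; ∂_i∘∂_j + ∂_j∘∂_i = 0 whenever |i−j| > 1; and x_i∘∂_j + ∂_j∘x_i = 0 whenever i ≠ j and i ≠ j+1. -/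
open scoped BigOperators

/-- The defining anticommutation relations of the odd polynomial ring. -/
inductive OddRel (a : ℕ) : FreeAlgebra ℤ (Fin a) → FreeAlgebra ℤ (Fin a) → Prop
  | anticomm (i j : Fin a) (h : i ≠ j) :
      OddRel a (FreeAlgebra.ι ℤ i * FreeAlgebra.ι ℤ j)
        (-(FreeAlgebra.ι ℤ j * FreeAlgebra.ι ℤ i))

/-- The ring of odd polynomials in `a` variables over `ℤ`. -/
abbrev OPol (a : ℕ) : Type := RingQuot (OddRel a)

/-- The variable `x_{i+1}` (`0`-based index). -/
noncomputable def OX {a : ℕ} (i : Fin a) : OPol a :=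
  RingQuot.mkRingHom (OddRel a) (FreeAlgebra.ι ℤ i)

/-- The variable `x_i` (`1`-based index), `0` if out of range. -/
noncomputable def xv (a : ℕ) (i : ℕ) : OPol a :=
  if h : 1 ≤ i ∧ i ≤ a then OX ⟨i - 1, by omega⟩ else 0

/-- The signed variable `x̃_i = (−1)^{i−1} x_i` (`0`-based index, so the sign is `(−1)^i`). -/
noncomputable def xt (a : ℕ) (i : Fin a) : OPol a := (-1 : OPol a) ^ (i : ℕ) * OX i

/-- Odd elementary symmetric polynomial `ε_k`. -/
noncomputable def eps (a k : ℕ) : OPol a :=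
  ∑ t ∈ Finset.powersetCard k (Finset.univ : Finset (Fin a)),
    ((t.sort (· ≤ ·)).map (xt a)).prod

/-- Odd complete symmetric polynomial `h_k`. -/
noncomputable def hp (a k : ℕ) : OPol a :=
  ∑ σ : Sym (Fin a) k, (((σ : Multiset (Fin a)).sort (· ≤ ·)).map (xt a)).prod

/-- The ordered monomial `x_1^{c_1} ⋯ x_a^{c_a}`. -/
noncomputable def xmon {a : ℕ} (c : Fin a → ℕ) : OPol a :=
  ((List.finRange a).map fun i => OX i ^ c i).prod

/-- The staircase monomial `x^{δ_a} = x_1^{a−1} x_2^{a−2} ⋯ x_a^0`. -/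
noncomputable def xdelta (a : ℕ) : OPol a :=
  ((List.finRange a).map fun i => OX i ^ (a - 1 - (i : ℕ))).prod

/-- Composite of the operators `d i` along a word, leftmost letter acting last (outermost). -/
noncomputable def dword {a : ℕ} (d : ℕ → OPol a →+ OPol a) : List ℕ → (OPol a →+ OPol a)
  | [] => AddMonoidHom.id _
  | i :: l => (d i).comp (dword d l)

/-- The word `1, (2,1), (3,2,1), …, (a−1,…,2,1)` for the longest element, so that
`dword d (DList a) = ∂_1∘(∂_2∘∂_1)∘⋯∘(∂_{a−1}∘⋯∘∂_1) = D_a`. -/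
def DList (a : ℕ) : List ℕ :=
  ((List.range a).map fun b => (List.range b).reverse.map (· + 1)).flatten

/-- Left multiplication by `f` as a `ℤ`-linear endomorphism. -/
noncomputable def mulL {a : ℕ} (f : OPol a) : Module.End ℤ (OPol a) :=
  (AddMonoidHom.mulLeft f).toIntLinearMap

/-- The generators of the odd nilHecke ring inside `End_ℤ(OPol a)`. -/
noncomputable def onhGens (a : ℕ) (d : ℕ → OPol a →+ OPol a) :
    Set (Module.End ℤ (OPol a)) :=
  {T | (∃ i : Fin a, T = mulL (OX i)) ∨
    (∃ i : ℕ, 1 ≤ i ∧ i + 1 ≤ a ∧ T = (d i).toIntLinearMap)}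

/-- The simple transposition `s_i` (`1`-based) of `{1,…,a}`. -/
def sperm (a : ℕ) (i : ℕ) : Equiv.Perm (Fin a) :=
  if h : 1 ≤ i ∧ i + 1 ≤ a then Equiv.swap ⟨i - 1, by omega⟩ ⟨i, by omega⟩ else 1

/-- The permutation associated to a word in the simple transpositions. -/
def wordPerm (a : ℕ) (l : List ℕ) : Equiv.Perm (Fin a) := (l.map (sperm a)).prod

/-- Evaluation of an (even) multivariate polynomial at the squared variables `x_1², …, x_a²`. -/
noncomputable def sqEval {a : ℕ} (p : MvPolynomial (Fin a) ℤ) : OPol a :=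
  ∑ m ∈ p.support,
    MvPolynomial.coeff m p • ((List.finRange a).map fun i => OX i ^ (2 * m i)).prod

/-- The odd symmetrization operator `S(f) = (−1)^{C(a,3)} w₀(D_a(f·x^{δ_a}))`. -/
noncomputable def oddSymzn (a : ℕ) (d : ℕ → OPol a →+ OPol a) (W0 : OPol a →+* OPol a)
    (f : OPol a) : OPol a :=
  (-1 : OPol a) ^ Nat.choose a 3 * W0 (dword d (DList a) (f * xdelta a))

/-- The odd Schur polynomial `s_α = (−1)^{C(a,3)} w₀(D_a(x^α·x^{δ_a}))`. -/
noncomputable def schurP (a : ℕ) (d : ℕ → OPol a →+ OPol a) (W0 : OPol a →+* OPol a)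
    (α : Fin a → ℕ) : OPol a :=
  (-1 : OPol a) ^ Nat.choose a 3 * W0 (dword d (DList a) (xmon α * xdelta a))

/-- The 0-Hecke generator `∂̄_r = x_r ∘ ∂_r`. -/
noncomputable def dbar (a : ℕ) (d : ℕ → OPol a →+ OPol a) (r : ℕ) : OPol a →+ OPol a :=
  (AddMonoidHom.mulLeft (xv a r)).comp (d r)

/-- The `ℤ`-span of products of exactly `n` variables: the degree-`2n` component of `OPol a`. -/
def degComp (a n : ℕ) : Submodule ℤ (OPol a) :=
  Submodule.span ℤ {f : OPol a | ∃ l : List (Fin a), l.length = n ∧ f = (l.map OX).prod}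

/-- Odd Schubert polynomial `𝔰_w = ∂_{w⁻¹w₀}(x^{δ_a})` for a fixed choice `red` of
reduced expressions. -/
noncomputable def schubert (a : ℕ) (d : ℕ → OPol a →+ OPol a)
    (red : Equiv.Perm (Fin a) → List ℕ) (w : Equiv.Perm (Fin a)) : OPol a :=
  dword d (red (w⁻¹ * Fin.revPerm)) (xdelta a)

/-- Product of odd elementary symmetric polynomials along the parts of a partition,
in non-increasing order. -/
noncomputable def epsPart (a : ℕ) {n : ℕ} (p : Nat.Partition n) : OPol a :=
  (((p.parts.sort (· ≤ ·)).reverse).map (eps a)).prod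
namespace OddNilAux
variable {a : ℕ}

lemma opol_ind {P : OPol a → Prop} (hC : ∀ c : ℤ, P ((c : OPol a)))
    (hX : ∀ j : ℕ, 1 ≤ j → j ≤ a → P (xv a j))
    (hadd : ∀ f g, P f → P g → P (f + g))
    (hmul : ∀ f g, P f → P g → P (f * g)) : ∀ f, P f := by
  intro f
  obtain ⟨x, rfl⟩ := RingQuot.mkRingHom_surjective (OddRel a) f
  induction x with
  | grade0 r =>
      have h : (RingQuot.mkRingHom (OddRel a)) (algebraMap ℤ _ r) = ((r : OPol a)) := by
        simp [algebraMap_int_eq, map_intCast]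
      rw [h]; exact hC r
  | grade1 i =>
      have h : (RingQuot.mkRingHom (OddRel a)) (FreeAlgebra.ι ℤ i) = xv a ((i:ℕ)+1) := by
        rw [xv, dif_pos ⟨by omega, by omega⟩]
        simp [OX]
      rw [h]; exact hX _ (by omega) (by omega)
  | mul x y hx hy => rw [map_mul]; exact hmul _ _ hx hy
  | add x y hx hy => rw [map_add]; exact hadd _ _ hx hy

end OddNilAux
namespace OddNilAux
variable {a : ℕ}

lemma nmul (x y : OPol a) : -x * y = -(x * y) := neg_mul x y
lemma mneg (x y : OPol a) : x * -y = -(x * y) := mul_neg x y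
lemma zmul (x : OPol a) : 0 * x = 0 := zero_mul x
lemma mzer (x : OPol a) : x * 0 = 0 := mul_zero x
lemma omul (x : OPol a) : 1 * x = x := one_mul x
lemma mone (x : OPol a) : x * 1 = x := mul_one x
lemma amul (x y z : OPol a) : (x + y) * z = x * z + y * z := add_mul x y z
lemma madd (x y z : OPol a) : x * (y + z) = x * y + x * z := mul_add x y z
lemma masc (x y z : OPol a) : x * y * z = x * (y * z) := mul_assoc x y z

end OddNilAux
namespace OddNilAux
section
variable {a : ℕ} (s : ℕ → OPol a →+* OPol a) (d : ℕ → OPol a →+ OPol a)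
variable (hs : ∀ i j : ℕ, 1 ≤ i → i + 1 ≤ a → 1 ≤ j → j ≤ a →
      s i (xv a j) =
        if j = i then -xv a (i + 1) else if j = i + 1 then -xv a i else -xv a j)
variable (hd1 : ∀ i : ℕ, 1 ≤ i → i + 1 ≤ a → d i 1 = 0)
variable (hdx : ∀ i j : ℕ, 1 ≤ i → i + 1 ≤ a → 1 ≤ j → j ≤ a →
      d i (xv a j) = if j = i ∨ j = i + 1 then 1 else 0)
variable (hdL : ∀ i : ℕ, 1 ≤ i → i + 1 ≤ a → ∀ f g : OPol a,
      d i (f * g) = d i f * g + s i f * d i g)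

include hs in
lemma sxi {i : ℕ} (h1 : 1 ≤ i) (h2 : i + 1 ≤ a) : s i (xv a i) = -xv a (i+1) := by
  rw [hs i i h1 h2 h1 (by omega), if_pos rfl]

include hs in
lemma sxi1 {i : ℕ} (h1 : 1 ≤ i) (h2 : i + 1 ≤ a) : s i (xv a (i+1)) = -xv a i := by
  rw [hs i (i+1) h1 h2 (by omega) h2, if_neg (by omega), if_pos rfl]

include hs in
lemma sxo {i j : ℕ} (h1 : 1 ≤ i) (h2 : i + 1 ≤ a) (hj1 : 1 ≤ j) (hj2 : j ≤ a)
    (n1 : j ≠ i) (n2 : j ≠ i + 1) : s i (xv a j) = -xv a j := by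
  rw [hs i j h1 h2 hj1 hj2, if_neg n1, if_neg n2]

include hdx in
lemma dxi {i : ℕ} (h1 : 1 ≤ i) (h2 : i + 1 ≤ a) : d i (xv a i) = 1 := by
  rw [hdx i i h1 h2 h1 (by omega), if_pos (Or.inl rfl)]

include hdx in
lemma dxi1 {i : ℕ} (h1 : 1 ≤ i) (h2 : i + 1 ≤ a) : d i (xv a (i+1)) = 1 := by
  rw [hdx i (i+1) h1 h2 (by omega) h2, if_pos (Or.inr rfl)]

include hdx in
lemma dxo {i j : ℕ} (h1 : 1 ≤ i) (h2 : i + 1 ≤ a) (hj1 : 1 ≤ j) (hj2 : j ≤ a)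
    (n1 : j ≠ i) (n2 : j ≠ i + 1) : d i (xv a j) = 0 := by
  rw [hdx i j h1 h2 hj1 hj2, if_neg (by tauto)]

include hd1 in
lemma d_intCast {i : ℕ} (h1 : 1 ≤ i) (h2 : i + 1 ≤ a) (c : ℤ) : d i ((c : OPol a)) = 0 := by
  have h : ((c : OPol a)) = c • (1 : OPol a) := by simp
  rw [h, map_zsmul, hd1 i h1 h2, zsmul_zero]

include hd1 in
lemma d_neg_one {i : ℕ} (h1 : 1 ≤ i) (h2 : i + 1 ≤ a) : d i (-1 : OPol a) = 0 := by
  rw [map_neg, hd1 i h1 h2, neg_zero]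

end
end OddNilAux
namespace OddNilAux
section
variable {a : ℕ} (s : ℕ → OPol a →+* OPol a) (d : ℕ → OPol a →+ OPol a)
variable (hs : ∀ i j : ℕ, 1 ≤ i → i + 1 ≤ a → 1 ≤ j → j ≤ a →
      s i (xv a j) =
        if j = i then -xv a (i + 1) else if j = i + 1 then -xv a i else -xv a j)
variable (hd1 : ∀ i : ℕ, 1 ≤ i → i + 1 ≤ a → d i 1 = 0)
variable (hdx : ∀ i j : ℕ, 1 ≤ i → i + 1 ≤ a → 1 ≤ j → j ≤ a →
      d i (xv a j) = if j = i ∨ j = i + 1 then 1 else 0)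
variable (hdL : ∀ i : ℕ, 1 ≤ i → i + 1 ≤ a → ∀ f g : OPol a,
      d i (f * g) = d i f * g + s i f * d i g)

include hs in
lemma ss {i : ℕ} (h1 : 1 ≤ i) (h2 : i + 1 ≤ a) : ∀ f, s i (s i f) = f := by
  apply opol_ind
  · intro c; rw [map_intCast, map_intCast]
  · intro j hj1 hj2
    by_cases e1 : j = i
    · subst e1; rw [sxi s hs h1 h2, map_neg, sxi1 s hs h1 h2, neg_neg]
    · by_cases e2 : j = i+1
      · subst e2; rw [sxi1 s hs h1 h2, map_neg, sxi s hs h1 h2, neg_neg]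
      · rw [sxo s hs h1 h2 hj1 hj2 e1 e2, map_neg, sxo s hs h1 h2 hj1 hj2 e1 e2, neg_neg]
  · intro f g hf hg; rw [map_add, map_add, hf, hg]
  · intro f g hf hg; rw [map_mul, map_mul, hf, hg]

include hs hd1 hdx hdL in
lemma ds {i : ℕ} (h1 : 1 ≤ i) (h2 : i + 1 ≤ a) :
    ∀ f, d i (s i f) = -(s i (d i f)) := by
  apply opol_ind
  · intro c
    rw [map_intCast, d_intCast d hd1 h1 h2, map_zero, neg_zero]
  · intro j hj1 hj2
    by_cases e1 : j = i
    · subst e1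
      rw [sxi s hs h1 h2, map_neg, dxi1 d hdx h1 h2, dxi d hdx h1 h2, map_one]
    · by_cases e2 : j = i+1
      · subst e2
        rw [sxi1 s hs h1 h2, map_neg, dxi d hdx h1 h2, dxi1 d hdx h1 h2, map_one]
      · rw [sxo s hs h1 h2 hj1 hj2 e1 e2, map_neg,
          dxo d hdx h1 h2 hj1 hj2 e1 e2]
        simp
  · intro f g hf hg; rw [map_add, map_add, map_add, hf, hg, map_add, neg_add]
  · intro f g hf hg
    rw [map_mul, hdL i h1 h2, hdL i h1 h2, hf, hg, map_add, map_mul, map_mul,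
      ss s hs h1 h2 f]
    simp only [nmul, mneg]
    abel

include hs hd1 hdx hdL in
lemma dd {i : ℕ} (h1 : 1 ≤ i) (h2 : i + 1 ≤ a) : ∀ f, d i (d i f) = 0 := by
  apply opol_ind
  · intro c; rw [d_intCast d hd1 h1 h2, map_zero]
  · intro j hj1 hj2
    rw [hdx i j h1 h2 hj1 hj2]
    split
    · rw [hd1 i h1 h2]
    · rw [map_zero]
  · intro f g hf hg; rw [map_add, map_add, hf, hg, add_zero]
  · intro f g hf hg
    rw [hdL i h1 h2, map_add, hdL i h1 h2, hdL i h1 h2, hf, hg,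
      ds s d hs hd1 hdx hdL h1 h2, ss s hs h1 h2 f]
    simp only [nmul, mneg, zmul, mzer]
    abel

end
end OddNilAux
namespace OddNilAux
section
variable {a : ℕ} (s : ℕ → OPol a →+* OPol a) (d : ℕ → OPol a →+ OPol a)
variable (hs : ∀ i j : ℕ, 1 ≤ i → i + 1 ≤ a → 1 ≤ j → j ≤ a →
      s i (xv a j) =
        if j = i then -xv a (i + 1) else if j = i + 1 then -xv a i else -xv a j)
variable (hd1 : ∀ i : ℕ, 1 ≤ i → i + 1 ≤ a → d i 1 = 0)
variable (hdx : ∀ i j : ℕ, 1 ≤ i → i + 1 ≤ a → 1 ≤ j → j ≤ a →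
      d i (xv a j) = if j = i ∨ j = i + 1 then 1 else 0)
variable (hdL : ∀ i : ℕ, 1 ≤ i → i + 1 ≤ a → ∀ f g : OPol a,
      d i (f * g) = d i f * g + s i f * d i g)

lemma sITE {i : ℕ} (P : Prop) [Decidable P] :
    s i (if P then (1 : OPol a) else 0) = if P then (1 : OPol a) else 0 := by
  split
  · exact map_one _
  · exact map_zero _

include hd1 in
lemma dITE {i : ℕ} (h1 : 1 ≤ i) (h2 : i + 1 ≤ a) (P : Prop) [Decidable P] :
    d i (if P then (1 : OPol a) else 0) = 0 := by
  split
  · exact hd1 i h1 h2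
  · exact map_zero _

include hs in
lemma braidS {i : ℕ} (h1 : 1 ≤ i) (h2 : i + 2 ≤ a) :
    ∀ f, s i (s (i+1) (s i f)) = s (i+1) (s i (s (i+1) f)) := by
  have e : i + 1 + 1 = i + 2 := by omega
  have hA1 : 1 ≤ i := h1
  have hA2 : i + 1 ≤ a := by omega
  have hB1 : 1 ≤ i + 1 := by omega
  have hB2 : i + 1 + 1 ≤ a := by omega
  have sxiB : s (i+1) (xv a (i+1)) = -xv a (i+2) := by
    have := sxi s hs hB1 hB2; rwa [e] at this
  have sxi1B : s (i+1) (xv a (i+2)) = -xv a (i+1) := by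
    have := sxi1 s hs hB1 hB2; rwa [e] at this
  have Ai : s i (xv a i) = -xv a (i+1) := sxi s hs hA1 hA2
  have Ai1 : s i (xv a (i+1)) = -xv a i := sxi1 s hs hA1 hA2
  have Ai2 : s i (xv a (i+2)) = -xv a (i+2) :=
    sxo s hs hA1 hA2 (by omega) (by omega) (by omega) (by omega)
  have Bi : s (i+1) (xv a i) = -xv a i :=
    sxo s hs hB1 hB2 (by omega) (by omega) (by omega) (by omega)
  apply opol_ind
  · intro c; simp only [map_intCast]
  · intro j hj1 hj2
    by_cases e1 : j = i
    · subst e1; simp only [map_neg, neg_neg, Ai, Ai1, Ai2, Bi, sxiB, sxi1B]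
    · by_cases e2 : j = i + 1
      · subst e2; simp only [map_neg, neg_neg, Ai, Ai1, Ai2, Bi, sxiB, sxi1B]
      · by_cases e3 : j = i + 2
        · subst e3; simp only [map_neg, neg_neg, Ai, Ai1, Ai2, Bi, sxiB, sxi1B]
        · have Aj : s i (xv a j) = -xv a j := sxo s hs hA1 hA2 hj1 hj2 e1 e2
          have Bj : s (i+1) (xv a j) = -xv a j :=
            sxo s hs hB1 hB2 hj1 hj2 (by omega) (by omega)
          simp only [map_neg, neg_neg, Aj, Bj]
  · intro f g hf hg; simp only [map_add, hf, hg]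
  · intro f g hf hg; simp only [map_mul, hf, hg]

end
end OddNilAux
namespace OddNilAux
section
variable {a : ℕ} (s : ℕ → OPol a →+* OPol a) (d : ℕ → OPol a →+ OPol a)
variable (hs : ∀ i j : ℕ, 1 ≤ i → i + 1 ≤ a → 1 ≤ j → j ≤ a →
      s i (xv a j) =
        if j = i then -xv a (i + 1) else if j = i + 1 then -xv a i else -xv a j)
variable (hd1 : ∀ i : ℕ, 1 ≤ i → i + 1 ≤ a → d i 1 = 0)
variable (hdx : ∀ i j : ℕ, 1 ≤ i → i + 1 ≤ a → 1 ≤ j → j ≤ a →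
      d i (xv a j) = if j = i ∨ j = i + 1 then 1 else 0)
variable (hdL : ∀ i : ℕ, 1 ≤ i → i + 1 ≤ a → ∀ f g : OPol a,
      d i (f * g) = d i f * g + s i f * d i g)

include hs hd1 hdx hdL in
/-- `B ∘ σ ∘ τ = σ ∘ τ ∘ A` -/
lemma conjBA {i : ℕ} (h1 : 1 ≤ i) (h2 : i + 2 ≤ a) :
    ∀ f, d (i+1) (s i (s (i+1) f)) = s i (s (i+1) (d i f)) := by
  have e : i + 1 + 1 = i + 2 := by omega
  have hA1 : 1 ≤ i := h1
  have hA2 : i + 1 ≤ a := by omega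
  have hB1 : 1 ≤ i + 1 := by omega
  have hB2 : i + 1 + 1 ≤ a := by omega
  have Ai : s i (xv a i) = -xv a (i+1) := sxi s hs hA1 hA2
  have Ai1 : s i (xv a (i+1)) = -xv a i := sxi1 s hs hA1 hA2
  have Ai2 : s i (xv a (i+2)) = -xv a (i+2) :=
    sxo s hs hA1 hA2 (by omega) (by omega) (by omega) (by omega)
  have Bi : s (i+1) (xv a i) = -xv a i :=
    sxo s hs hB1 hB2 (by omega) (by omega) (by omega) (by omega)
  have sxiB : s (i+1) (xv a (i+1)) = -xv a (i+2) := by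
    have := sxi s hs hB1 hB2; rwa [e] at this
  have sxi1B : s (i+1) (xv a (i+2)) = -xv a (i+1) := by
    have := sxi1 s hs hB1 hB2; rwa [e] at this
  have dAi : d i (xv a i) = 1 := dxi d hdx hA1 hA2
  have dAi1 : d i (xv a (i+1)) = 1 := dxi1 d hdx hA1 hA2
  have dAi2 : d i (xv a (i+2)) = 0 :=
    dxo d hdx hA1 hA2 (by omega) (by omega) (by omega) (by omega)
  have dBi : d (i+1) (xv a i) = 0 :=
    dxo d hdx hB1 hB2 (by omega) (by omega) (by omega) (by omega)
  have dBi1 : d (i+1) (xv a (i+1)) = 1 := dxi d hdx hB1 hB2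
  have dBi2 : d (i+1) (xv a (i+2)) = 1 := by
    have := dxi1 d hdx hB1 hB2; rwa [e] at this
  apply opol_ind
  · intro c
    rw [map_intCast, map_intCast, d_intCast d hd1 hB1 hB2,
      d_intCast d hd1 hA1 hA2, map_zero, map_zero]
  · intro j hj1 hj2
    by_cases e1 : j = i
    · subst e1
      simp only [Ai, Ai1, Ai2, Bi, sxiB, sxi1B, dAi, dAi1, dAi2, dBi, dBi1, dBi2, map_neg, neg_neg, map_one, map_zero, neg_zero]
    · by_cases e2 : j = i + 1
      · subst e2
        simp only [Ai, Ai1, Ai2, Bi, sxiB, sxi1B, dAi, dAi1, dAi2, dBi, dBi1, dBi2, map_neg, neg_neg, map_one, map_zero, neg_zero]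
      · by_cases e3 : j = i + 2
        · subst e3
          simp only [Ai, Ai1, Ai2, Bi, sxiB, sxi1B, dAi, dAi1, dAi2, dBi, dBi1, dBi2, map_neg, neg_neg, map_one, map_zero, neg_zero]
        · have Aj : s i (xv a j) = -xv a j := sxo s hs hA1 hA2 hj1 hj2 e1 e2
          have Bj : s (i+1) (xv a j) = -xv a j :=
            sxo s hs hB1 hB2 hj1 hj2 (by omega) (by omega)
          have dAj : d i (xv a j) = 0 := dxo d hdx hA1 hA2 hj1 hj2 e1 e2
          have dBj : d (i+1) (xv a j) = 0 :=
            dxo d hdx hB1 hB2 hj1 hj2 (by omega) (by omega)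
          simp only [Ai, Ai1, Ai2, Bi, sxiB, sxi1B, dAi, dAi1, dAi2, dBi, dBi1, dBi2, map_neg, neg_neg, map_one, map_zero, neg_zero, Aj, Bj, dAj, dBj]
  · intro f g hf hg; simp only [map_add, hf, hg]
  · intro f g hf hg
    rw [map_mul, map_mul, hdL (i+1) hB1 hB2, hdL i hA1 hA2, map_add, map_add,
      map_mul, map_mul, map_mul, map_mul, hf, hg, braidS s hs h1 h2 f]

include hs hd1 hdx hdL in
/-- `A ∘ τ ∘ σ = τ ∘ σ ∘ B` -/
lemma conjAB {i : ℕ} (h1 : 1 ≤ i) (h2 : i + 2 ≤ a) :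
    ∀ f, d i (s (i+1) (s i f)) = s (i+1) (s i (d (i+1) f)) := by
  have e : i + 1 + 1 = i + 2 := by omega
  have hA1 : 1 ≤ i := h1
  have hA2 : i + 1 ≤ a := by omega
  have hB1 : 1 ≤ i + 1 := by omega
  have hB2 : i + 1 + 1 ≤ a := by omega
  have Ai : s i (xv a i) = -xv a (i+1) := sxi s hs hA1 hA2
  have Ai1 : s i (xv a (i+1)) = -xv a i := sxi1 s hs hA1 hA2
  have Ai2 : s i (xv a (i+2)) = -xv a (i+2) :=
    sxo s hs hA1 hA2 (by omega) (by omega) (by omega) (by omega)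
  have Bi : s (i+1) (xv a i) = -xv a i :=
    sxo s hs hB1 hB2 (by omega) (by omega) (by omega) (by omega)
  have sxiB : s (i+1) (xv a (i+1)) = -xv a (i+2) := by
    have := sxi s hs hB1 hB2; rwa [e] at this
  have sxi1B : s (i+1) (xv a (i+2)) = -xv a (i+1) := by
    have := sxi1 s hs hB1 hB2; rwa [e] at this
  have dAi : d i (xv a i) = 1 := dxi d hdx hA1 hA2
  have dAi1 : d i (xv a (i+1)) = 1 := dxi1 d hdx hA1 hA2
  have dAi2 : d i (xv a (i+2)) = 0 :=
    dxo d hdx hA1 hA2 (by omega) (by omega) (by omega) (by omega)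
  have dBi : d (i+1) (xv a i) = 0 :=
    dxo d hdx hB1 hB2 (by omega) (by omega) (by omega) (by omega)
  have dBi1 : d (i+1) (xv a (i+1)) = 1 := dxi d hdx hB1 hB2
  have dBi2 : d (i+1) (xv a (i+2)) = 1 := by
    have := dxi1 d hdx hB1 hB2; rwa [e] at this
  apply opol_ind
  · intro c
    rw [map_intCast, map_intCast, d_intCast d hd1 hA1 hA2,
      d_intCast d hd1 hB1 hB2, map_zero, map_zero]
  · intro j hj1 hj2
    by_cases e1 : j = i
    · subst e1
      simp only [Ai, Ai1, Ai2, Bi, sxiB, sxi1B, dAi, dAi1, dAi2, dBi, dBi1, dBi2, map_neg, neg_neg, map_one, map_zero, neg_zero]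
    · by_cases e2 : j = i + 1
      · subst e2
        simp only [Ai, Ai1, Ai2, Bi, sxiB, sxi1B, dAi, dAi1, dAi2, dBi, dBi1, dBi2, map_neg, neg_neg, map_one, map_zero, neg_zero]
      · by_cases e3 : j = i + 2
        · subst e3
          simp only [Ai, Ai1, Ai2, Bi, sxiB, sxi1B, dAi, dAi1, dAi2, dBi, dBi1, dBi2, map_neg, neg_neg, map_one, map_zero, neg_zero]
        · have Aj : s i (xv a j) = -xv a j := sxo s hs hA1 hA2 hj1 hj2 e1 e2
          have Bj : s (i+1) (xv a j) = -xv a j :=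
            sxo s hs hB1 hB2 hj1 hj2 (by omega) (by omega)
          have dAj : d i (xv a j) = 0 := dxo d hdx hA1 hA2 hj1 hj2 e1 e2
          have dBj : d (i+1) (xv a j) = 0 :=
            dxo d hdx hB1 hB2 hj1 hj2 (by omega) (by omega)
          simp only [Ai, Ai1, Ai2, Bi, sxiB, sxi1B, dAi, dAi1, dAi2, dBi, dBi1, dBi2, map_neg, neg_neg, map_one, map_zero, neg_zero, Aj, Bj, dAj, dBj]
  · intro f g hf hg; simp only [map_add, hf, hg]
  · intro f g hf hg
    rw [map_mul, map_mul, hdL i hA1 hA2, hdL (i+1) hB1 hB2, map_add, map_add,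
      map_mul, map_mul, map_mul, map_mul, hf, hg, ← braidS s hs h1 h2 f]

end
end OddNilAux
namespace OddNilAux
section
variable {a : ℕ} (s : ℕ → OPol a →+* OPol a) (d : ℕ → OPol a →+ OPol a)
variable (hs : ∀ i j : ℕ, 1 ≤ i → i + 1 ≤ a → 1 ≤ j → j ≤ a →
      s i (xv a j) =
        if j = i then -xv a (i + 1) else if j = i + 1 then -xv a i else -xv a j)
variable (hd1 : ∀ i : ℕ, 1 ≤ i → i + 1 ≤ a → d i 1 = 0)
variable (hdx : ∀ i j : ℕ, 1 ≤ i → i + 1 ≤ a → 1 ≤ j → j ≤ a →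
      d i (xv a j) = if j = i ∨ j = i + 1 then 1 else 0)
variable (hdL : ∀ i : ℕ, 1 ≤ i → i + 1 ≤ a → ∀ f g : OPol a,
      d i (f * g) = d i f * g + s i f * d i g)

include hs hd1 hdx hdL in
/-- `σ∘B∘A + A∘B∘σ = B∘σ∘B` -/
lemma G1 {i : ℕ} (h1 : 1 ≤ i) (h2 : i + 2 ≤ a) :
    ∀ f, s i (d (i+1) (d i f)) + d i (d (i+1) (s i f)) = d (i+1) (s i (d (i+1) f)) := by
  have e : i + 1 + 1 = i + 2 := by omega
  have hA1 : 1 ≤ i := h1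
  have hA2 : i + 1 ≤ a := by omega
  have hB1 : 1 ≤ i + 1 := by omega
  have hB2 : i + 1 + 1 ≤ a := by omega
  have Ai : s i (xv a i) = -xv a (i+1) := sxi s hs hA1 hA2
  have Ai1 : s i (xv a (i+1)) = -xv a i := sxi1 s hs hA1 hA2
  have Ai2 : s i (xv a (i+2)) = -xv a (i+2) :=
    sxo s hs hA1 hA2 (by omega) (by omega) (by omega) (by omega)
  have Bi : s (i+1) (xv a i) = -xv a i :=
    sxo s hs hB1 hB2 (by omega) (by omega) (by omega) (by omega)
  have sxiB : s (i+1) (xv a (i+1)) = -xv a (i+2) := by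
    have := sxi s hs hB1 hB2; rwa [e] at this
  have sxi1B : s (i+1) (xv a (i+2)) = -xv a (i+1) := by
    have := sxi1 s hs hB1 hB2; rwa [e] at this
  have dAi : d i (xv a i) = 1 := dxi d hdx hA1 hA2
  have dAi1 : d i (xv a (i+1)) = 1 := dxi1 d hdx hA1 hA2
  have dAi2 : d i (xv a (i+2)) = 0 :=
    dxo d hdx hA1 hA2 (by omega) (by omega) (by omega) (by omega)
  have dBi : d (i+1) (xv a i) = 0 :=
    dxo d hdx hB1 hB2 (by omega) (by omega) (by omega) (by omega)
  have dBi1 : d (i+1) (xv a (i+1)) = 1 := dxi d hdx hB1 hB2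
  have dBi2 : d (i+1) (xv a (i+2)) = 1 := by
    have := dxi1 d hdx hB1 hB2; rwa [e] at this
  have hd1A : d i (1 : OPol a) = 0 := hd1 i hA1 hA2
  have hd1B : d (i+1) (1 : OPol a) = 0 := hd1 (i+1) hB1 hB2
  apply opol_ind
  · intro c
    simp only [map_intCast, d_intCast d hd1 hA1 hA2, d_intCast d hd1 hB1 hB2,
      map_zero, add_zero]
  · intro j hj1 hj2
    by_cases e1 : j = i
    · subst e1
      simp only [Ai, Ai1, Ai2, Bi, sxiB, sxi1B, dAi, dAi1, dAi2, dBi, dBi1,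
        dBi2, hd1A, hd1B, map_neg, neg_neg, map_one, map_zero, neg_zero,
        add_zero, zero_add]
    · by_cases e2 : j = i + 1
      · subst e2
        simp only [Ai, Ai1, Ai2, Bi, sxiB, sxi1B, dAi, dAi1, dAi2, dBi, dBi1,
          dBi2, hd1A, hd1B, map_neg, neg_neg, map_one, map_zero, neg_zero,
          add_zero, zero_add]
      · by_cases e3 : j = i + 2
        · subst e3
          simp only [Ai, Ai1, Ai2, Bi, sxiB, sxi1B, dAi, dAi1, dAi2, dBi, dBi1,
            dBi2, hd1A, hd1B, map_neg, neg_neg, map_one, map_zero, neg_zero,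
            add_zero, zero_add]
        · have Aj : s i (xv a j) = -xv a j := sxo s hs hA1 hA2 hj1 hj2 e1 e2
          have Bj : s (i+1) (xv a j) = -xv a j :=
            sxo s hs hB1 hB2 hj1 hj2 (by omega) (by omega)
          have dAj : d i (xv a j) = 0 := dxo d hdx hA1 hA2 hj1 hj2 e1 e2
          have dBj : d (i+1) (xv a j) = 0 :=
            dxo d hdx hB1 hB2 hj1 hj2 (by omega) (by omega)
          simp only [Aj, Bj, dAj, dBj, hd1A, hd1B, map_neg, neg_neg, map_one,
            map_zero, neg_zero, add_zero, zero_add]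
  · intro f g hf hg
    simp only [map_add]
    rw [← hf, ← hg]
    abel
  · intro f g hf hg
    simp only [map_mul, map_add, hdL i hA1 hA2, hdL (i+1) hB1 hB2]
    rw [ds s d hs hd1 hdx hdL hA1 hA2 g, conjAB s d hs hd1 hdx hdL h1 h2 f,
      ← conjBA s d hs hd1 hdx hdL h1 h2 f, ← braidS s hs h1 h2 f, ← hf, ← hg]
    simp only [amul, madd, mneg]
    abel

include hs hd1 hdx hdL in
/-- `A∘τ∘A = τ∘A∘B + B∘A∘τ` -/
lemma G2 {i : ℕ} (h1 : 1 ≤ i) (h2 : i + 2 ≤ a) :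
    ∀ f, d i (s (i+1) (d i f)) =
      s (i+1) (d i (d (i+1) f)) + d (i+1) (d i (s (i+1) f)) := by
  have e : i + 1 + 1 = i + 2 := by omega
  have hA1 : 1 ≤ i := h1
  have hA2 : i + 1 ≤ a := by omega
  have hB1 : 1 ≤ i + 1 := by omega
  have hB2 : i + 1 + 1 ≤ a := by omega
  have Ai : s i (xv a i) = -xv a (i+1) := sxi s hs hA1 hA2
  have Ai1 : s i (xv a (i+1)) = -xv a i := sxi1 s hs hA1 hA2
  have Ai2 : s i (xv a (i+2)) = -xv a (i+2) :=
    sxo s hs hA1 hA2 (by omega) (by omega) (by omega) (by omega)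
  have Bi : s (i+1) (xv a i) = -xv a i :=
    sxo s hs hB1 hB2 (by omega) (by omega) (by omega) (by omega)
  have sxiB : s (i+1) (xv a (i+1)) = -xv a (i+2) := by
    have := sxi s hs hB1 hB2; rwa [e] at this
  have sxi1B : s (i+1) (xv a (i+2)) = -xv a (i+1) := by
    have := sxi1 s hs hB1 hB2; rwa [e] at this
  have dAi : d i (xv a i) = 1 := dxi d hdx hA1 hA2
  have dAi1 : d i (xv a (i+1)) = 1 := dxi1 d hdx hA1 hA2
  have dAi2 : d i (xv a (i+2)) = 0 :=
    dxo d hdx hA1 hA2 (by omega) (by omega) (by omega) (by omega)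
  have dBi : d (i+1) (xv a i) = 0 :=
    dxo d hdx hB1 hB2 (by omega) (by omega) (by omega) (by omega)
  have dBi1 : d (i+1) (xv a (i+1)) = 1 := dxi d hdx hB1 hB2
  have dBi2 : d (i+1) (xv a (i+2)) = 1 := by
    have := dxi1 d hdx hB1 hB2; rwa [e] at this
  have hd1A : d i (1 : OPol a) = 0 := hd1 i hA1 hA2
  have hd1B : d (i+1) (1 : OPol a) = 0 := hd1 (i+1) hB1 hB2
  apply opol_ind
  · intro c
    simp only [map_intCast, d_intCast d hd1 hA1 hA2, d_intCast d hd1 hB1 hB2,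
      map_zero, add_zero]
  · intro j hj1 hj2
    by_cases e1 : j = i
    · subst e1
      simp only [Ai, Ai1, Ai2, Bi, sxiB, sxi1B, dAi, dAi1, dAi2, dBi, dBi1,
        dBi2, hd1A, hd1B, map_neg, neg_neg, map_one, map_zero, neg_zero,
        add_zero, zero_add]
    · by_cases e2 : j = i + 1
      · subst e2
        simp only [Ai, Ai1, Ai2, Bi, sxiB, sxi1B, dAi, dAi1, dAi2, dBi, dBi1,
          dBi2, hd1A, hd1B, map_neg, neg_neg, map_one, map_zero, neg_zero,
          add_zero, zero_add]
      · by_cases e3 : j = i + 2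
        · subst e3
          simp only [Ai, Ai1, Ai2, Bi, sxiB, sxi1B, dAi, dAi1, dAi2, dBi, dBi1,
            dBi2, hd1A, hd1B, map_neg, neg_neg, map_one, map_zero, neg_zero,
            add_zero, zero_add]
        · have Aj : s i (xv a j) = -xv a j := sxo s hs hA1 hA2 hj1 hj2 e1 e2
          have Bj : s (i+1) (xv a j) = -xv a j :=
            sxo s hs hB1 hB2 hj1 hj2 (by omega) (by omega)
          have dAj : d i (xv a j) = 0 := dxo d hdx hA1 hA2 hj1 hj2 e1 e2
          have dBj : d (i+1) (xv a j) = 0 :=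
            dxo d hdx hB1 hB2 hj1 hj2 (by omega) (by omega)
          simp only [Aj, Bj, dAj, dBj, hd1A, hd1B, map_neg, neg_neg, map_one,
            map_zero, neg_zero, add_zero, zero_add]
  · intro f g hf hg
    simp only [map_add]
    rw [hf, hg]
    abel
  · intro f g hf hg
    simp only [map_mul, map_add, hdL i hA1 hA2, hdL (i+1) hB1 hB2]
    rw [hf, hg, ← conjBA s d hs hd1 hdx hdL h1 h2 f,
      conjAB s d hs hd1 hdx hdL h1 h2 f, braidS s hs h1 h2 f,
      ds s d hs hd1 hdx hdL hB1 hB2 g]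
    simp only [amul, madd, mneg]
    abel

include hs hd1 hdx hdL in
lemma braidD {i : ℕ} (h1 : 1 ≤ i) (h2 : i + 2 ≤ a) :
    ∀ f, d i (d (i+1) (d i f)) = d (i+1) (d i (d (i+1) f)) := by
  have hA1 : 1 ≤ i := h1
  have hA2 : i + 1 ≤ a := by omega
  have hB1 : 1 ≤ i + 1 := by omega
  have hB2 : i + 1 + 1 ≤ a := by omega
  have hd1A : d i (1 : OPol a) = 0 := hd1 i hA1 hA2
  have hd1B : d (i+1) (1 : OPol a) = 0 := hd1 (i+1) hB1 hB2
  apply opol_ind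
  · intro c
    simp only [d_intCast d hd1 hA1 hA2, d_intCast d hd1 hB1 hB2, map_zero]
  · intro j hj1 hj2
    rw [hdx i j hA1 hA2 hj1 hj2, hdx (i+1) j hB1 hB2 hj1 hj2,
      dITE d hd1 hB1 hB2, dITE d hd1 hA1 hA2, map_zero, map_zero]
  · intro f g hf hg
    simp only [map_add]
    rw [hf, hg]
  · intro f g hf hg
    simp only [map_mul, map_add, hdL i hA1 hA2, hdL (i+1) hB1 hB2]
    rw [hf, hg, dd s d hs hd1 hdx hdL hA1 hA2 g, dd s d hs hd1 hdx hdL hB1 hB2 g,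
      G2 s d hs hd1 hdx hdL h1 h2 f, ← conjBA s d hs hd1 hdx hdL h1 h2 f,
      conjAB s d hs hd1 hdx hdL h1 h2 f, braidS s hs h1 h2 f,
      ← G1 s d hs hd1 hdx hdL h1 h2 f]
    simp only [amul, madd, mzer, zmul]
    abel

end
end OddNilAux
namespace OddNilAux
section
variable {a : ℕ} (s : ℕ → OPol a →+* OPol a) (d : ℕ → OPol a →+ OPol a)
variable (hs : ∀ i j : ℕ, 1 ≤ i → i + 1 ≤ a → 1 ≤ j → j ≤ a →
      s i (xv a j) =
        if j = i then -xv a (i + 1) else if j = i + 1 then -xv a i else -xv a j)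
variable (hd1 : ∀ i : ℕ, 1 ≤ i → i + 1 ≤ a → d i 1 = 0)
variable (hdx : ∀ i j : ℕ, 1 ≤ i → i + 1 ≤ a → 1 ≤ j → j ≤ a →
      d i (xv a j) = if j = i ∨ j = i + 1 then 1 else 0)
variable (hdL : ∀ i : ℕ, 1 ≤ i → i + 1 ≤ a → ∀ f g : OPol a,
      d i (f * g) = d i f * g + s i f * d i g)

include hs in
lemma ssFar {i j : ℕ} (hi1 : 1 ≤ i) (hi2 : i + 1 ≤ a) (hj1 : 1 ≤ j)
    (hj2 : j + 1 ≤ a) (hfar : i + 1 < j ∨ j + 1 < i) :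
    ∀ f, s i (s j f) = s j (s i f) := by
  have Sii : s i (xv a i) = -xv a (i+1) := sxi s hs hi1 hi2
  have Sii1 : s i (xv a (i+1)) = -xv a i := sxi1 s hs hi1 hi2
  have Sij : s i (xv a j) = -xv a j :=
    sxo s hs hi1 hi2 hj1 (by omega) (by omega) (by omega)
  have Sij1 : s i (xv a (j+1)) = -xv a (j+1) :=
    sxo s hs hi1 hi2 (by omega) hj2 (by omega) (by omega)
  have Sjj : s j (xv a j) = -xv a (j+1) := sxi s hs hj1 hj2
  have Sjj1 : s j (xv a (j+1)) = -xv a j := sxi1 s hs hj1 hj2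
  have Sji : s j (xv a i) = -xv a i :=
    sxo s hs hj1 hj2 hi1 (by omega) (by omega) (by omega)
  have Sji1 : s j (xv a (i+1)) = -xv a (i+1) :=
    sxo s hs hj1 hj2 (by omega) hi2 (by omega) (by omega)
  apply opol_ind
  · intro c; simp only [map_intCast]
  · intro k hk1 hk2
    by_cases e1 : k = i
    · subst e1; simp only [Sii, Sii1, Sij, Sij1, Sjj, Sjj1, Sji, Sji1,
        map_neg, neg_neg]
    · by_cases e2 : k = i + 1
      · subst e2; simp only [Sii, Sii1, Sij, Sij1, Sjj, Sjj1, Sji, Sji1,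
          map_neg, neg_neg]
      · by_cases e3 : k = j
        · subst e3; simp only [Sii, Sii1, Sij, Sij1, Sjj, Sjj1, Sji, Sji1,
            map_neg, neg_neg]
        · by_cases e4 : k = j + 1
          · subst e4; simp only [Sii, Sii1, Sij, Sij1, Sjj, Sjj1, Sji, Sji1,
              map_neg, neg_neg]
          · have Sik : s i (xv a k) = -xv a k := sxo s hs hi1 hi2 hk1 hk2 e1 e2
            have Sjk : s j (xv a k) = -xv a k := sxo s hs hj1 hj2 hk1 hk2 e3 e4
            simp only [Sik, Sjk, map_neg, neg_neg]
  · intro f g hf hg; simp only [map_add, hf, hg]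
  · intro f g hf hg; simp only [map_mul, hf, hg]

include hs hd1 hdx hdL in
lemma dsFar {i j : ℕ} (hi1 : 1 ≤ i) (hi2 : i + 1 ≤ a) (hj1 : 1 ≤ j)
    (hj2 : j + 1 ≤ a) (hfar : i + 1 < j ∨ j + 1 < i) :
    ∀ f, d i (s j f) = -(s j (d i f)) := by
  have Sjj : s j (xv a j) = -xv a (j+1) := sxi s hs hj1 hj2
  have Sjj1 : s j (xv a (j+1)) = -xv a j := sxi1 s hs hj1 hj2
  have dij : d i (xv a j) = 0 :=
    dxo d hdx hi1 hi2 hj1 (by omega) (by omega) (by omega)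
  have dij1 : d i (xv a (j+1)) = 0 :=
    dxo d hdx hi1 hi2 (by omega) hj2 (by omega) (by omega)
  apply opol_ind
  · intro c
    simp only [map_intCast, d_intCast d hd1 hi1 hi2, map_zero, neg_zero]
  · intro k hk1 hk2
    by_cases e3 : k = j
    · subst e3
      simp only [Sjj, Sjj1, dij, dij1, map_neg, map_zero, neg_zero]
    · by_cases e4 : k = j + 1
      · subst e4
        simp only [Sjj, Sjj1, dij, dij1, map_neg, map_zero, neg_zero]
      · have Sjk : s j (xv a k) = -xv a k := sxo s hs hj1 hj2 hk1 hk2 e3 e4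
        rw [Sjk, map_neg, hdx i k hi1 hi2 hk1 hk2, sITE s]
  · intro f g hf hg
    simp only [map_add, hf, hg]
    abel
  · intro f g hf hg
    simp only [map_mul, map_add, hdL i hi1 hi2]
    rw [hf, hg, ssFar s hs hi1 hi2 hj1 hj2 hfar f]
    simp only [nmul, mneg]
    abel

include hs hd1 hdx hdL in
lemma ddFarNeg {i j : ℕ} (hi1 : 1 ≤ i) (hi2 : i + 1 ≤ a) (hj1 : 1 ≤ j)
    (hj2 : j + 1 ≤ a) (hfar : i + 1 < j ∨ j + 1 < i) :
    ∀ f, d i (d j f) = -(d j (d i f)) := by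
  have hfar' : j + 1 < i ∨ i + 1 < j := hfar.symm
  apply opol_ind
  · intro c
    simp only [d_intCast d hd1 hi1 hi2, d_intCast d hd1 hj1 hj2, map_zero,
      neg_zero]
  · intro k hk1 hk2
    rw [hdx j k hj1 hj2 hk1 hk2, dITE d hd1 hi1 hi2,
      hdx i k hi1 hi2 hk1 hk2, dITE d hd1 hj1 hj2, neg_zero]
  · intro f g hf hg
    simp only [map_add, hf, hg]
    abel
  · intro f g hf hg
    simp only [map_mul, map_add, hdL i hi1 hi2, hdL j hj1 hj2]
    rw [hf, hg, dsFar s d hs hd1 hdx hdL hi1 hi2 hj1 hj2 hfar f,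
      dsFar s d hs hd1 hdx hdL hj1 hj2 hi1 hi2 hfar' f,
      ssFar s hs hi1 hi2 hj1 hj2 hfar f]
    simp only [nmul, mneg]
    abel

end
end OddNilAux

/-- the defining relations of the odd nilHecke algebra hold among the
odd divided difference operators and multiplication operators on `OPol a`. -/
theorem odd_nilHecke_relations (a : ℕ)
    (s : ℕ → OPol a →+* OPol a)
    (hs : ∀ i j : ℕ, 1 ≤ i → i + 1 ≤ a → 1 ≤ j → j ≤ a →
      s i (xv a j) =
        if j = i then -xv a (i + 1) else if j = i + 1 then -xv a i else -xv a j)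
    (d : ℕ → OPol a →+ OPol a)
    (hd1 : ∀ i : ℕ, 1 ≤ i → i + 1 ≤ a → d i 1 = 0)
    (hdx : ∀ i j : ℕ, 1 ≤ i → i + 1 ≤ a → 1 ≤ j → j ≤ a →
      d i (xv a j) = if j = i ∨ j = i + 1 then 1 else 0)
    (hdL : ∀ i : ℕ, 1 ≤ i → i + 1 ≤ a → ∀ f g : OPol a,
      d i (f * g) = d i f * g + s i f * d i g) :
    (∀ i : ℕ, 1 ≤ i → i + 1 ≤ a → ∀ f : OPol a, d i (d i f) = 0) ∧
    (∀ i : ℕ, 1 ≤ i → i + 2 ≤ a → ∀ f : OPol a,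
      d i (d (i + 1) (d i f)) = d (i + 1) (d i (d (i + 1) f))) ∧
    (∀ i : ℕ, 1 ≤ i → i + 1 ≤ a → ∀ f : OPol a,
      xv a i * d i f + d i (xv a (i + 1) * f) = f) ∧
    (∀ i : ℕ, 1 ≤ i → i + 1 ≤ a → ∀ f : OPol a,
      d i (xv a i * f) + xv a (i + 1) * d i f = f) ∧
    (∀ i j : ℕ, 1 ≤ i → i + 1 ≤ a → 1 ≤ j → j + 1 ≤ a → (i + 1 < j ∨ j + 1 < i) →
      ∀ f : OPol a, d i (d j f) + d j (d i f) = 0) ∧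
    (∀ i j : ℕ, 1 ≤ i → i ≤ a → 1 ≤ j → j + 1 ≤ a → i ≠ j → i ≠ j + 1 →
      ∀ f : OPol a, xv a i * d j f + d j (xv a i * f) = 0) := by
  refine ⟨fun i h1 h2 f => OddNilAux.dd s d hs hd1 hdx hdL h1 h2 f,
    fun i h1 h2 f => OddNilAux.braidD s d hs hd1 hdx hdL h1 h2 f,
    ?_, ?_, ?_, ?_⟩
  · intro i h1 h2 f
    rw [hdL i h1 h2, OddNilAux.dxi1 d hdx h1 h2, OddNilAux.sxi1 s hs h1 h2]
    simp only [OddNilAux.omul, OddNilAux.nmul]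
    abel
  · intro i h1 h2 f
    rw [hdL i h1 h2, OddNilAux.dxi d hdx h1 h2, OddNilAux.sxi s hs h1 h2]
    simp only [OddNilAux.omul, OddNilAux.nmul]
    abel
  · intro i j hi1 hi2 hj1 hj2 hfar f
    rw [OddNilAux.ddFarNeg s d hs hd1 hdx hdL hi1 hi2 hj1 hj2 hfar f]
    exact neg_add_cancel _
  · intro i j hi1 hi2 hj1 hj2 hij hij1 f
    rw [hdL j hj1 hj2, OddNilAux.dxo d hdx hj1 hj2 hi1 hi2 hij hij1,
      OddNilAux.sxo s hs hj1 hj2 hi1 hi2 hij hij1]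
    simp only [OddNilAux.zmul, OddNilAux.nmul, zero_add]
    abel
end

section
/- For every m ≥ 1, the identity Σ_{k=0}^{m} (−1)^{k(k+1)/2} ε_k h_{m−k} = 0 holds in OPol_a. -/
open scoped BigOperators

lemma ox_anticomm {a : ℕ} {i j : Fin a} (h : i ≠ j) :
    OX i * OX j = (-1 : ℤ) • (OX j * OX i) := by
  have h1 : OX i * OX j = -(OX j * OX i) := by
    have := RingQuot.mkRingHom_rel (OddRel.anticomm i j h)
    simpa [OX, map_mul, map_neg] using this
  rw [h1]
  exact (neg_one_smul ℤ _).symm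

lemma neg_one_pow_smul {a : ℕ} (n : ℕ) (x : OPol a) :
    (-1 : OPol a) ^ n * x = ((-1 : ℤ) ^ n) • x := by
  rw [zsmul_eq_mul]
  push_cast
  rfl

lemma xt_eq_smul {a : ℕ} (i : Fin a) : xt a i = ((-1 : ℤ) ^ (i:ℕ)) • OX i := by
  rw [xt, neg_one_pow_smul]

lemma xt_anticomm {a : ℕ} {i j : Fin a} (h : i ≠ j) :
    xt a i * xt a j = (-1 : ℤ) • (xt a j * xt a i) := by
  rw [xt_eq_smul, xt_eq_smul, smul_mul_assoc, mul_smul_comm, smul_mul_assoc, mul_smul_comm,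
    ox_anticomm h]
  simp only [smul_smul]
  congr 1
  ring

noncomputable def Yv (a : ℕ) (b : ℕ) : OPol a := if h : b < a then xt a ⟨b, h⟩ else 0

lemma Yv_anticomm {a : ℕ} {b c : ℕ} (h : b ≠ c) :
    Yv a b * Yv a c = (-1 : ℤ) • (Yv a c * Yv a b) := by
  unfold Yv
  split_ifs with h1 h2 h2
  · exact xt_anticomm (by simp [Fin.ext_iff, h])
  all_goals simp

noncomputable def Ee (a : ℕ) : ℕ → ℕ → OPol a
  | 0, 0 => 1
  | 0, _+1 => 0
  | _+1, 0 => 1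
  | b+1, k+1 => Ee a b (k+1) + Ee a b k * Yv a b

noncomputable def Hh (a : ℕ) : ℕ → ℕ → OPol a
  | 0, 0 => 1
  | 0, _+1 => 0
  | _+1, 0 => 1
  | b+1, k+1 => Hh a b (k+1) + Hh a (b+1) k * Yv a b

lemma Yv_comm_Hh {a : ℕ} (b : ℕ) : ∀ b' ≤ b, ∀ j,
    Yv a b * Hh a b' j = ((-1 : ℤ) ^ j) • (Hh a b' j * Yv a b) := by
  intro b'
  induction b' with
  | zero =>
    intro _ j
    cases j with
    | zero => simp [Hh]
    | succ j => simp [Hh]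
  | succ b' ih =>
    intro hb j
    induction j with
    | zero => simp [Hh]
    | succ j ihj =>
      have hb' : b' ≤ b := by omega
      have hne : b ≠ b' := by omega
      rw [Hh, mul_add, add_mul, zsmul_add, ih hb' (j+1), ← mul_assoc, ihj,
        smul_mul_assoc, mul_assoc, Yv_anticomm hne, mul_smul_comm, smul_smul]
      rw [show ((-1:ℤ)^j * -1) = (-1:ℤ)^(j+1) by ring]
      rw [mul_assoc]

lemma Ee_zero (a b : ℕ) : Ee a b 0 = 1 := by cases b <;> rw [Ee]
lemma Hh_zero (a b : ℕ) : Hh a b 0 = 1 := by cases b <;> rw [Hh]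
lemma Ee_succ (a b k : ℕ) : Ee a (b+1) (k+1) = Ee a b (k+1) + Ee a b k * Yv a b := by rw [Ee]
lemma Hh_succ (a b k : ℕ) : Hh a (b+1) (k+1) = Hh a b (k+1) + Hh a (b+1) k * Yv a b := by rw [Hh]
lemma Ee_zero_vars (a k : ℕ) : Ee a 0 (k+1) = 0 := by rw [Ee]
lemma Hh_zero_vars (a k : ℕ) : Hh a 0 (k+1) = 0 := by rw [Hh]

lemma Ee_one_eq_Hh_one (a b : ℕ) : Ee a b 1 = Hh a b 1 := by
  induction b with
  | zero => rw [Ee_zero_vars, Hh_zero_vars]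
  | succ b ih => rw [Ee_succ, Hh_succ, ih, Ee_zero, Hh_zero]

noncomputable def Sb (a b m : ℕ) : OPol a :=
  ∑ k ∈ Finset.range (m + 1),
    ((-1 : ℤ) ^ (k * (k + 1) / 2)) • (Ee a b k * Hh a b (m - k))

lemma sigma_step (j n : ℕ) (hj : j ≤ n) :
    ((-1:ℤ) ^ ((j+1) * (j+2) / 2)) * ((-1:ℤ) ^ (n - j))
      = ((-1:ℤ) ^ (n+1)) * ((-1:ℤ) ^ (j * (j+1) / 2)) := by
  rw [← pow_add, ← pow_add]
  congr 1
  have h1 : (j+1) * (j+2) = j * (j+1) + 2 * (j+1) := by ring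
  omega

lemma OPol_zsmul_sum {a : ℕ} (c : ℤ) (s : Finset ℕ) (f : ℕ → OPol a) :
    c • ∑ i ∈ s, f i = ∑ i ∈ s, c • f i := by
  exact Finset.smul_sum

lemma Sb_key (a b n : ℕ) :
    ∑ k ∈ Finset.range (n + 2),
      ((-1 : ℤ) ^ (k * (k + 1) / 2)) • (Ee a (b+1) k * Hh a b (n + 1 - k))
    = Sb a b (n+1) + ((-1:ℤ)^(n+1)) • (Sb a b n * Yv a b) := by
  rw [Finset.sum_range_succ']
  have hE : ∀ j ∈ Finset.range (n+1),
      ((-1 : ℤ) ^ ((j+1) * (j+1+1) / 2)) • (Ee a (b+1) (j+1) * Hh a b (n + 1 - (j+1)))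
      = ((-1 : ℤ) ^ ((j+1) * (j+1+1) / 2)) • (Ee a b (j+1) * Hh a b (n + 1 - (j+1)))
        + ((-1:ℤ)^(n+1)) • ((((-1 : ℤ) ^ (j * (j+1) / 2)) • (Ee a b j * Hh a b (n - j))) * Yv a b) := by
    intro j hj
    have hj' : j ≤ n := by simpa using Finset.mem_range_succ_iff.mp hj
    have h1 : n + 1 - (j+1) = n - j := by omega
    rw [h1, Ee_succ, add_mul (Ee a b (j+1)) (Ee a b j * Yv a b) (Hh a b (n-j)), zsmul_add]
    congr 1
    rw [mul_assoc, Yv_comm_Hh b b le_rfl (n-j), mul_smul_comm, smul_smul,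
      smul_mul_assoc, smul_smul, sigma_step j n hj', ← mul_assoc]
  rw [Finset.sum_congr rfl hE, Finset.sum_add_distrib, ← OPol_zsmul_sum, ← Finset.sum_mul]
  have h0 : ((-1 : ℤ) ^ (0 * (0+1) / 2)) • (Ee a (b+1) 0 * Hh a b (n + 1 - 0))
      = ((-1 : ℤ) ^ (0 * (0+1) / 2)) • (Ee a b 0 * Hh a b (n + 1 - 0)) := by
    rw [Ee_zero, Ee_zero]
  rw [h0]
  have : Sb a b (n+1) = ∑ j ∈ Finset.range (n+1),
      ((-1 : ℤ) ^ ((j+1) * (j+1+1) / 2)) • (Ee a b (j+1) * Hh a b (n + 1 - (j+1)))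
      + ((-1 : ℤ) ^ (0 * (0+1) / 2)) • (Ee a b 0 * Hh a b (n + 1 - 0)) := by
    rw [Sb, Finset.sum_range_succ']
  rw [this, Sb]
  rw [add_right_comm]

lemma Sb_rec (a b n : ℕ) :
    Sb a (b+1) (n+1)
      = Sb a b (n+1) + ((-1:ℤ)^(n+1)) • (Sb a b n * Yv a b) + Sb a (b+1) n * Yv a b := by
  have hH : ∀ k ∈ Finset.range (n+1),
      ((-1:ℤ) ^ (k * (k+1) / 2)) • (Ee a (b+1) k * Hh a (b+1) (n + 1 - k))
      = ((-1:ℤ) ^ (k * (k+1) / 2)) • (Ee a (b+1) k * Hh a b (n + 1 - k))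
        + (((-1:ℤ) ^ (k * (k+1) / 2)) • (Ee a (b+1) k * Hh a (b+1) (n - k))) * Yv a b := by
    intro k hk
    have hk' : k ≤ n := by simpa using Finset.mem_range_succ_iff.mp hk
    have h1 : n + 1 - k = (n - k) + 1 := by omega
    rw [h1, Hh_succ, mul_add (Ee a (b+1) k), zsmul_add, ← mul_assoc, smul_mul_assoc]
  have e2 : Sb a (b+1) n = ∑ k ∈ Finset.range (n+1),
      ((-1:ℤ) ^ (k * (k+1) / 2)) • (Ee a (b+1) k * Hh a (b+1) (n - k)) := by rw [Sb]
  have e3 : Hh a (b+1) (n + 1 - (n+1)) = Hh a b (n + 1 - (n+1)) := by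
    simp [Hh_zero]
  rw [Sb, Finset.sum_range_succ, Finset.sum_congr rfl hH, Finset.sum_add_distrib,
    ← Finset.sum_mul, ← e2, e3, add_right_comm, ← Finset.sum_range_succ, Sb_key]

lemma Sb_eq_zero (a : ℕ) : ∀ b m, 1 ≤ m → Sb a b m = 0 := by
  intro b
  induction b with
  | zero =>
    intro m hm
    rw [Sb]
    apply Finset.sum_eq_zero
    intro k hk
    rcases Nat.eq_zero_or_pos k with h|h
    · subst h
      obtain ⟨m', rfl⟩ : ∃ m', m = m' + 1 := ⟨m-1, by omega⟩
      simp [Hh_zero_vars]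
    · obtain ⟨k', rfl⟩ : ∃ k', k = k' + 1 := ⟨k-1, by omega⟩
      simp [Ee_zero_vars]
  | succ b ih =>
    intro m
    induction m with
    | zero => omega
    | succ n ihn =>
      intro _
      rcases Nat.eq_zero_or_pos n with h|h
      · subst h
        rw [Sb, Finset.sum_range_succ, Finset.sum_range_succ, Finset.sum_range_zero]
        norm_num
        simp [Ee_zero, Hh_zero, Ee_one_eq_Hh_one]
      · rw [Sb_rec, ih (n+1) (by omega), ih n h, ihn h]
        simp

lemma sort_snoc {a : ℕ} (s : Multiset (Fin a)) (i : Fin a) (h : ∀ x ∈ s, x ≤ i) :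
    (i ::ₘ s).sort (· ≤ ·) = s.sort (· ≤ ·) ++ [i] := by
  refine (fun hp h1 h2 => List.Perm.eq_of_pairwise' (r := (· ≤ ·)) h1 h2 hp) ?_ ?_ ?_
  · rw [← Multiset.coe_eq_coe]
    simp only [← Multiset.cons_coe, Multiset.sort_eq]
    rw [show ((Multiset.sort s (fun x1 x2 => x1 ≤ x2) ++ [i] : List (Fin a)) : Multiset (Fin a))
        = (Multiset.sort s (fun x1 x2 => x1 ≤ x2) : List (Fin a)) + ([i] : List (Fin a)) from rfl]
    simp [Multiset.sort_eq]
    rw [add_comm]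
    simp [Multiset.singleton_add]
  · exact Multiset.pairwise_sort _ _
  · rw [List.pairwise_append]
    refine ⟨Multiset.pairwise_sort _ _, List.pairwise_singleton _ _, ?_⟩
    intro x hx y hy
    simp at hy
    subst hy
    exact h x (by simpa using (Multiset.mem_sort (α := Fin a) (· ≤ ·)).mp hx)

noncomputable def epsB (a b k : ℕ) : OPol a :=
  ∑ t ∈ Finset.powersetCard k ((Finset.univ : Finset (Fin a)).filter (fun i : Fin a => (i:ℕ) < b)),
    ((t.sort (· ≤ ·)).map (xt a)).prod

lemma epsB_eq_Ee (a : ℕ) : ∀ b k, epsB a b k = Ee a b k := by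
  intro b
  induction b with
  | zero =>
    intro k
    have h0 : ((Finset.univ : Finset (Fin a)).filter (fun i : Fin a => (i:ℕ) < 0)) = ∅ := by
      simp
    cases k with
    | zero => rw [epsB, h0]; simp [Ee]
    | succ k =>
      rw [epsB, h0, Ee]
      rw [Finset.powersetCard_eq_empty.mpr (by simp)]
      simp
  | succ b ih =>
    intro k
    by_cases hb : b < a
    · set ib : Fin a := ⟨b, hb⟩ with hib
      have hsplit : ((Finset.univ : Finset (Fin a)).filter (fun i : Fin a => (i:ℕ) < b + 1))
          = insert ib ((Finset.univ : Finset (Fin a)).filter (fun i : Fin a => (i:ℕ) < b)) := by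
        ext x
        simp [hib, Fin.ext_iff]
        omega
      have hnot : ib ∉ (Finset.univ : Finset (Fin a)).filter (fun i : Fin a => (i:ℕ) < b) := by
        simp [hib]
      cases k with
      | zero =>
        rw [epsB, Ee_zero]
        simp
      | succ k =>
        rw [epsB, hsplit, Finset.powersetCard_succ_insert hnot, Finset.sum_union, Ee_succ,
          ← ih (k+1), ← ih k, epsB, epsB, Finset.sum_image, Finset.sum_mul]
        · congr 1
          apply Finset.sum_congr rfl
          intro t ht
          have htsub : ∀ x ∈ t, (x:ℕ) < b := by
            intro x hx
            have := Finset.mem_powersetCard.mp ht |>.1 hx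
            simpa using this
          have hmax : ∀ x ∈ t.val, x ≤ ib := by
            intro x hx
            exact le_of_lt (by exact_mod_cast htsub x hx)
          have hinotmem : ib ∉ t := fun hmem => absurd (htsub ib hmem) (by simp [hib])
          show (List.map (xt a) (Multiset.sort (insert ib t).val (fun x1 x2 => x1 ≤ x2))).prod = _
          rw [Finset.insert_val_of_notMem hinotmem, sort_snoc t.val ib hmax,
            List.map_append, List.prod_append]
          rw [show Yv a b = xt a ib from by rw [Yv, dif_pos hb]]
          rw [List.map_singleton, List.prod_singleton]
          rfl
        · -- injectivity of insert ib on powersetCard k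
          intro s1 h1 s2 h2 hins
          have hs1 : ib ∉ s1 := fun hm => by
            have := (Finset.mem_powersetCard.mp h1).1 hm
            simp [hib] at this
          have hs2 : ib ∉ s2 := fun hm => by
            have := (Finset.mem_powersetCard.mp h2).1 hm
            simp [hib] at this
          rw [← Finset.erase_insert hs1, ← Finset.erase_insert hs2, hins]
        · -- disjointness
          rw [Finset.disjoint_left]
          intro t ht htim
          obtain ⟨s', hs', rfl⟩ := Finset.mem_image.mp htim
          have : ib ∈ insert ib s' := Finset.mem_insert_self _ _
          have hsub := (Finset.mem_powersetCard.mp ht).1 this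
          rw [Finset.mem_filter] at hsub
          simp [hib] at hsub
    · have hsame : ((Finset.univ : Finset (Fin a)).filter (fun i : Fin a => (i:ℕ) < b + 1))
          = ((Finset.univ : Finset (Fin a)).filter (fun i : Fin a => (i:ℕ) < b)) := by
        apply Finset.filter_congr
        intro x _
        have := x.isLt
        constructor <;> intro <;> omega
      have hY : Yv a b = 0 := by rw [Yv, dif_neg hb]
      cases k with
      | zero => rw [epsB, Ee_zero]; simp
      | succ k =>
        rw [epsB, hsame, Ee_succ, hY, mul_zero, add_zero, ← ih (k+1), epsB]

noncomputable def hpB (a b k : ℕ) : OPol a :=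
  ∑ σ : Sym (Fin a) k,
    if ∀ i ∈ (σ : Multiset (Fin a)), (i:ℕ) < b then
      (((σ : Multiset (Fin a)).sort (· ≤ ·)).map (xt a)).prod else 0

lemma hpB_zero (a b : ℕ) : hpB a b 0 = 1 := by
  rw [hpB]
  rw [Finset.sum_eq_single_of_mem (Sym.nil : Sym (Fin a) 0) (Finset.mem_univ _)]
  · have h0 : ((Sym.nil : Sym (Fin a) 0) : Multiset (Fin a)) = 0 := rfl
    rw [if_pos]
    · rw [h0, Multiset.sort_zero]; rfl
    · intro i hi; rw [h0] at hi; simp at hi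
  · intro σ _ hσ
    exact absurd (Subsingleton.elim σ Sym.nil) hσ

lemma hpB_eq_Hh (a : ℕ) : ∀ b k, hpB a b k = Hh a b k := by
  intro b
  induction b with
  | zero =>
    intro k
    cases k with
    | zero => rw [hpB_zero, Hh_zero]
    | succ k =>
      rw [hpB, Hh_zero_vars]
      apply Finset.sum_eq_zero
      intro σ _
      rw [if_neg]
      intro hall
      have hcard : Multiset.card (σ : Multiset (Fin a)) = k+1 := σ.2
      obtain ⟨i, hi⟩ := Multiset.card_pos_iff_exists_mem.mp (by rw [hcard]; omega)
      exact absurd (hall i hi) (by omega)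
  | succ b ih =>
    intro k
    induction k with
    | zero => rw [hpB_zero, Hh_zero]
    | succ k ihk =>
      by_cases hb : b < a
      · set ib : Fin a := ⟨b, hb⟩ with hib
        set P : Sym (Fin a) (k+1) → Prop := fun σ => ib ∈ (σ : Multiset (Fin a)) with hP
        set f : Sym (Fin a) (k+1) → OPol a := fun σ =>
          if ∀ i ∈ (σ : Multiset (Fin a)), (i:ℕ) < b + 1 then
            (((σ : Multiset (Fin a)).sort (· ≤ ·)).map (xt a)).prod else 0 with hf
        have hsplit : hpB a (b+1) (k+1)
            = ∑ σ ∈ Finset.univ.filter P, f σ + ∑ σ ∈ Finset.univ.filter (fun σ => ¬ P σ), f σ := by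
          rw [hpB, Finset.sum_filter_add_sum_filter_not]
        have hnotmem : ∑ σ ∈ Finset.univ.filter (fun σ => ¬ P σ), f σ = hpB a b (k+1) := by
          rw [hpB, ← Finset.sum_filter_add_sum_filter_not Finset.univ P]
          have h1 : ∑ σ ∈ Finset.univ.filter P,
              (if ∀ i ∈ (σ : Multiset (Fin a)), (i:ℕ) < b then
                (((σ : Multiset (Fin a)).sort (· ≤ ·)).map (xt a)).prod else 0) = 0 := by
            apply Finset.sum_eq_zero
            intro σ hσ
            rw [if_neg]
            intro hall
            have hmem : ib ∈ (σ : Multiset (Fin a)) := (Finset.mem_filter.mp hσ).2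
            exact absurd (hall ib hmem) (by simp [hib])
          rw [h1, zero_add]
          apply Finset.sum_congr rfl
          intro σ hσ
          have hnm : ¬ ib ∈ (σ : Multiset (Fin a)) := (Finset.mem_filter.mp hσ).2
          rw [hf]
          apply if_congr _ rfl rfl
          constructor
          · intro hall i hi
            have h1 := hall i hi
            rcases Nat.lt_succ_iff_lt_or_eq.mp h1 with h2|h2
            · exact h2
            · have hieq : i = ib := by
                apply Fin.ext
                simp [hib, h2]
              exact absurd (hieq ▸ hi) hnm
          · intro hall i hi
            exact Nat.lt_succ_of_lt (hall i hi)
        have hmem : ∑ σ ∈ Finset.univ.filter P, f σ = hpB a (b+1) k * Yv a b := by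
          have himg : Finset.univ.filter P
              = Finset.image (fun τ : Sym (Fin a) k => ib ::ₛ τ) Finset.univ := by
            ext σ
            simp only [Finset.mem_filter, Finset.mem_univ, true_and, Finset.mem_image, hP]
            constructor
            · intro hmem
              exact ⟨σ.erase ib hmem, Sym.cons_erase hmem⟩
            · rintro ⟨τ, _, rfl⟩
              rw [Sym.coe_cons]
              exact Multiset.mem_cons_self _ _
          rw [himg, Finset.sum_image (by
            intro s1 _ s2 _ h
            exact (Sym.cons_inj_right _ _ _).mp h)]
          rw [hpB, Finset.sum_mul]
          apply Finset.sum_congr rfl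
          intro τ _
          rw [hf]
          dsimp only
          rw [Sym.coe_cons, ite_mul, zero_mul]
          apply if_ctx_congr
          · constructor
            · intro hall i hi
              exact hall i (Multiset.mem_cons_of_mem hi)
            · intro hall i hi
              rcases Multiset.mem_cons.mp hi with h|h
              · subst h; simp [hib]
              · exact hall i h
          · intro hc
            have hmax : ∀ x ∈ (τ : Multiset (Fin a)), x ≤ ib := by
              intro x hx
              have := hc x hx
              rw [Fin.le_def]
              simp only [hib]
              omega
            rw [sort_snoc _ _ hmax, List.map_append, List.prod_append,
              List.map_singleton, List.prod_singleton]
            congr 1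
            rw [Yv, dif_pos hb]
          · intro _
            rfl
        rw [hsplit, hnotmem, hmem, ih (k+1), ihk, Hh_succ, add_comm]
      · have hY : Yv a b = 0 := by rw [Yv, dif_neg hb]
        rw [Hh_succ, hY, mul_zero, add_zero, ← ih (k+1), hpB, hpB]
        apply Finset.sum_congr rfl
        intro σ _
        apply if_congr _ rfl rfl
        constructor
        · intro hall i hi
          have := i.isLt
          omega
        · intro hall i hi
          exact Nat.lt_succ_of_lt (hall i hi)

lemma eps_eq_Ee (a k : ℕ) : eps a k = Ee a a k := by
  rw [← epsB_eq_Ee, epsB, eps]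
  congr 1
  congr 1
  ext i
  simp [i.isLt]

lemma hp_eq_Hh (a k : ℕ) : hp a k = Hh a a k := by
  rw [← hpB_eq_Hh, hpB, hp]
  apply Finset.sum_congr rfl
  intro σ _
  rw [if_pos]
  intro i _
  exact i.isLt

/-- the identity Σ_{k=0}^m (−1)^{k(k+1)/2} ε_k h_{m−k} = 0 in OPol_a. -/
theorem odd_elementary_complete_relation (a m : ℕ) (hm : 1 ≤ m) :
    ∑ k ∈ Finset.range (m + 1),
      (-1 : OPol a) ^ (k * (k + 1) / 2) * (eps a k * hp a (m - k)) = 0 := by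
  have : ∀ k ∈ Finset.range (m+1),
      (-1 : OPol a) ^ (k * (k + 1) / 2) * (eps a k * hp a (m - k))
      = ((-1 : ℤ) ^ (k * (k + 1) / 2)) • (Ee a a k * Hh a a (m - k)) := by
    intro k _
    rw [neg_one_pow_smul, eps_eq_Ee, hp_eq_Hh]
  rw [Finset.sum_congr rfl this]
  exact Sb_eq_zero a a m hm
end

section
/- Let w_0 be the longest element of S_a, acting on OPol_a via the signed permutation action. Then for 1 ≤ k ≤ a, w_0(ε_k) = (−1)^{C(k,2) + k·C(a−1,2)} ε_k, where C(n,2) = n(n−1)/2. Consequently w_0 maps OΛ_a onto itself: w_0(OΛ_a) = OΛ_a. -/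
open scoped BigOperators

section Aux
variable {a : ℕ}

lemma OX_anticomm {i j : Fin a} (h : i ≠ j) : OX i * OX j = -(OX j * OX i) := by
  have := RingQuot.mkRingHom_rel (OddRel.anticomm i j h)
  simpa [OX, map_mul, map_neg] using this

lemma m1 (x : OPol a) : (-1 : OPol a) * x = -x := neg_one_mul x
lemma m1r (x : OPol a) : x * (-1 : OPol a) = -x := mul_neg_one x
lemma nm (x y : OPol a) : (-x) * y = -(x * y) := neg_mul x y
lemma mn (x y : OPol a) : x * (-y) = -(x * y) := mul_neg x y
lemma nn (x : OPol a) : -(-x) = x := neg_neg x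

lemma negOnePow_left_comm (n : ℕ) (x : OPol a) : x * (-1) ^ n = (-1) ^ n * x :=
  (((Commute.neg_one_left x)).pow_left n).eq.symm

lemma mul_negOnePow_mul (n : ℕ) (x y : OPol a) :
    x * ((-1) ^ n * y) = (-1) ^ n * (x * y) := by
  rw [← mul_assoc, negOnePow_left_comm, mul_assoc]

lemma negOnePow_mod (m : ℕ) : ((-1 : OPol a)) ^ m = (-1) ^ (m % 2) := by
  conv_lhs => rw [← Nat.div_add_mod m 2]
  rw [pow_add, pow_mul]
  have : ((-1 : OPol a)) ^ 2 = 1 := by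
    rw [pow_succ, pow_one, mn, m1, nn]
  rw [this, one_pow, one_mul]

lemma negOnePow_congr {m n : ℕ} (h : m % 2 = n % 2) :
    ((-1 : OPol a)) ^ m = (-1) ^ n := by
  rw [negOnePow_mod m, negOnePow_mod n, h]

lemma move_front (x : Fin a) : ∀ l : List (Fin a), x ∉ l →
    (l.map OX).prod * OX x = (-1) ^ l.length * (OX x * (l.map OX).prod)
  | [], _ => by simp
  | y :: t, hx => by
    have hxy : x ≠ y := by rintro rfl; exact hx List.mem_cons_self
    have hxt : x ∉ t := fun h => hx (List.mem_cons_of_mem _ h)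
    have ih := move_front x t hxt
    calc (((y :: t).map OX).prod) * OX x
        = OX y * ((t.map OX).prod * OX x) := by simp [mul_assoc]
      _ = OX y * ((-1) ^ t.length * (OX x * (t.map OX).prod)) := by rw [ih]
      _ = (-1) ^ t.length * (OX y * (OX x * (t.map OX).prod)) := by
          rw [mul_negOnePow_mul]
      _ = (-1) ^ t.length * (-(OX x * OX y) * (t.map OX).prod) := by
          rw [← mul_assoc (OX y) (OX x), OX_anticomm hxy.symm]
      _ = (-1) ^ (y :: t).length * (OX x * ((y :: t).map OX).prod) := by
          simp only [List.map_cons, List.prod_cons, List.length_cons]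
          rw [pow_succ, mul_assoc, m1, nm, mul_assoc (OX x)]

lemma reverse_prod : ∀ l : List (Fin a), l.Nodup →
    (l.reverse.map OX).prod = (-1) ^ Nat.choose l.length 2 * (l.map OX).prod
  | [], _ => by simp
  | x :: t, hn => by
    have hxt : x ∉ t := (List.nodup_cons.mp hn).1
    have hnd : t.Nodup := (List.nodup_cons.mp hn).2
    have ih := reverse_prod t hnd
    calc ((x :: t).reverse.map OX).prod
        = (t.reverse.map OX).prod * OX x := by simp
      _ = (-1) ^ Nat.choose t.length 2 * ((t.map OX).prod * OX x) := by
          rw [ih, mul_assoc]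
      _ = (-1) ^ Nat.choose t.length 2 * ((-1) ^ t.length * (OX x * (t.map OX).prod)) := by
          rw [move_front x t hxt]
      _ = (-1) ^ Nat.choose (x :: t).length 2 * ((x :: t).map OX).prod := by
          rw [← mul_assoc, ← pow_add]
          have : Nat.choose t.length 2 + t.length = Nat.choose (x :: t).length 2 := by
            simp [List.length_cons, Nat.choose_succ_succ]; omega
          rw [this]; simp [mul_assoc]

end Aux
section Aux2
variable {a : ℕ}

lemma xt_prod : ∀ l : List (Fin a),
    (l.map (xt a)).prod = (-1) ^ ((l.map Fin.val).sum) * (l.map OX).prod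
  | [] => by simp
  | x :: t => by
    have ih := xt_prod t
    calc ((x :: t).map (xt a)).prod
        = ((-1) ^ (x : ℕ) * OX x) * ((-1) ^ ((t.map Fin.val).sum) * (t.map OX).prod) := by
          simp only [List.map_cons, List.prod_cons, ih, xt]
      _ = (-1) ^ (x : ℕ) * ((-1) ^ ((t.map Fin.val).sum) * (OX x * (t.map OX).prod)) := by
          rw [mul_assoc, mul_negOnePow_mul]
      _ = (-1) ^ (((x :: t).map Fin.val).sum) * (((x :: t).map OX).prod) := by
          rw [← mul_assoc, ← pow_add]
          simp [mul_assoc]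
  
lemma W0_OX_prod (W0 : OPol a →+* OPol a)
    (hW0 : ∀ i : Fin a, W0 (OX i) = (-1 : OPol a) ^ Nat.choose a 2 * OX (Fin.rev i)) :
    ∀ l : List (Fin a),
    W0 ((l.map OX).prod)
      = (-1) ^ (l.length * Nat.choose a 2) * ((l.map Fin.rev).map OX).prod
  | [] => by simp
  | x :: t => by
    have ih := W0_OX_prod W0 hW0 t
    calc W0 (((x :: t).map OX).prod)
        = W0 (OX x) * W0 ((t.map OX).prod) := by
          simp only [List.map_cons, List.prod_cons, map_mul]
      _ = ((-1) ^ Nat.choose a 2 * OX (Fin.rev x)) *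
            ((-1) ^ (t.length * Nat.choose a 2) * ((t.map Fin.rev).map OX).prod) := by
          rw [hW0, ih]
      _ = (-1) ^ Nat.choose a 2 * ((-1) ^ (t.length * Nat.choose a 2) *
            (OX (Fin.rev x) * ((t.map Fin.rev).map OX).prod)) := by
          rw [mul_assoc, mul_negOnePow_mul]
      _ = (-1) ^ ((x :: t).length * Nat.choose a 2) *
            (((x :: t).map Fin.rev).map OX).prod := by
          rw [← mul_assoc, ← pow_add]
          have : Nat.choose a 2 + t.length * Nat.choose a 2
              = (x :: t).length * Nat.choose a 2 := by
            simp [List.length_cons]; ring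
          rw [this]
          simp [mul_assoc]

lemma opol_induction {P : OPol a → Prop}
    (hint : ∀ n : ℤ, P ((n : ℤ) : OPol a))
    (hx : ∀ i : Fin a, P (OX i))
    (hadd : ∀ f g : OPol a, P f → P g → P (f + g))
    (hmul : ∀ f g : OPol a, P f → P g → P (f * g)) : ∀ f : OPol a, P f := by
  intro f
  obtain ⟨x, rfl⟩ := RingQuot.mkRingHom_surjective (OddRel a) f
  induction x using FreeAlgebra.induction with
  | grade0 r =>
    have : RingQuot.mkRingHom (OddRel a) (algebraMap ℤ _ r) = ((r : ℤ) : OPol a) := by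
      rw [show (algebraMap ℤ (FreeAlgebra ℤ (Fin a)) r) = ((r : ℤ) : FreeAlgebra ℤ (Fin a))
        from eq_intCast _ r]
      exact map_intCast _ r
    rw [this]; exact hint r
  | grade1 i => exact hx i
  | mul x y hx' hy' => rw [map_mul]; exact hmul _ _ hx' hy'
  | add x y hx' hy' => rw [map_add]; exact hadd _ _ hx' hy'

end Aux2
section Aux3
variable {a : ℕ}

/-- the reversal embedding -/
def remb (a : ℕ) : Fin a ↪ Fin a := ⟨Fin.rev, Fin.rev_injective⟩

lemma remb_remb (t : Finset (Fin a)) : (t.map (remb a)).map (remb a) = t := by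
  ext x
  simp only [Finset.mem_map, remb, Function.Embedding.coeFn_mk]
  constructor
  · rintro ⟨y, ⟨z, hz, rfl⟩, rfl⟩; simpa [Fin.rev_rev] using hz
  · intro hx; exact ⟨Fin.rev x, ⟨x, hx, rfl⟩, Fin.rev_rev x⟩

lemma sum_val_rev : ∀ l : List (Fin a),
    ((l.map Fin.rev).map Fin.val).sum + (l.map Fin.val).sum = l.length * (a - 1)
  | [] => by simp
  | x :: t => by
    have ih := sum_val_rev t
    have hx : (Fin.rev x : ℕ) + (x : ℕ) = a - 1 := by
      have := x.isLt
      rw [Fin.val_rev]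
      omega
    simp only [List.map_cons, List.sum_cons, List.length_cons]
    have hlen : (t.length + 1) * (a - 1) = t.length * (a - 1) + (a - 1) := by ring
    omega

lemma sort_map_rev (t : Finset (Fin a)) :
    (t.map (remb a)).sort (· ≤ ·) = ((t.sort (· ≤ ·)).map Fin.rev).reverse := by
  refine (fun hp h2 => List.Perm.eq_of_pairwise' (r := (· ≤ ·)) (Finset.pairwise_sort _ _) h2 hp) ?_ ?_
  · rw [← Multiset.coe_eq_coe]
    rw [Finset.sort_eq, Finset.map_val]
    rw [Multiset.coe_reverse]
    rw [← Multiset.map_coe, Finset.sort_eq]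
    rfl
  · have h1 : ((t.sort (· ≤ ·)).map Fin.rev).Pairwise (fun x y => y < x) := by
      rw [List.pairwise_map]
      exact (List.sortedLT_iff_pairwise.mp (Finset.sortedLT_sort t)).imp (fun h => Fin.rev_lt_rev.mpr h)
    have h2 := List.pairwise_reverse.mpr h1
    exact h2.imp (fun h => le_of_lt h)

end Aux3
section Part1
variable {a : ℕ} (W0 : OPol a →+* OPol a)

lemma W0_negOnePow (n : ℕ) : W0 ((-1 : OPol a) ^ n) = (-1) ^ n := by
  rw [map_pow]
  have h1 : W0 (-1 : OPol a) = -1 := by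
    have h := map_neg W0 (1 : OPol a)
    rw [map_one] at h
    exact h
  rw [h1]

variable (hW0 : ∀ i : Fin a, W0 (OX i) = (-1 : OPol a) ^ Nat.choose a 2 * OX (Fin.rev i))
include hW0

lemma W0_eps_term (ha : 1 ≤ a) {k : ℕ} (t : Finset (Fin a)) (ht : t.card = k) :
    W0 (((t.sort (· ≤ ·)).map (xt a)).prod)
      = (-1) ^ (Nat.choose k 2 + k * Nat.choose (a - 1) 2) *
        ((((t.map (remb a)).sort (· ≤ ·)).map (xt a)).prod) := by
  set L := t.sort (· ≤ ·) with hL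
  have hlen : L.length = k := by rw [hL, Finset.length_sort, ht]
  set M := (t.map (remb a)).sort (· ≤ ·) with hM
  have hndM : M.Nodup := Finset.sort_nodup _ _
  have hlenM : M.length = k := by rw [hM, Finset.length_sort, Finset.card_map, ht]
  have e1 : (L.map (xt a)).prod = (-1) ^ ((L.map Fin.val).sum) * (L.map OX).prod := xt_prod L
  set S := (L.map Fin.val).sum with hS
  have e2 : W0 ((L.map OX).prod)
      = (-1) ^ (k * Nat.choose a 2) * ((L.map Fin.rev).map OX).prod := by
    rw [W0_OX_prod W0 hW0 L, hlen]
  have hrev : L.map Fin.rev = M.reverse := by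
    rw [hM, sort_map_rev t, List.reverse_reverse]
  have e3 : (M.reverse.map OX).prod = (-1) ^ Nat.choose k 2 * (M.map OX).prod := by
    have h := reverse_prod M hndM
    rwa [hlenM] at h
  have e4 : (M.map (xt a)).prod = (-1) ^ ((M.map Fin.val).sum) * (M.map OX).prod := xt_prod M
  set S' := (M.map Fin.val).sum with hS'
  have hSS' : S' + S = k * (a - 1) := by
    have h := sum_val_rev L
    rw [hlen, hrev, List.map_reverse, List.sum_reverse, ← hS', ← hS] at h
    exact h
  have hcs : k * Nat.choose a 2 = k * Nat.choose (a - 1) 2 + k * (a - 1) := by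
    obtain ⟨b, rfl⟩ : ∃ b, a = b + 1 := ⟨a - 1, by omega⟩
    simp only [Nat.choose_succ_succ, Nat.choose_one_right, Nat.add_sub_cancel]
    ring
  have hpar : (-1 : OPol a) ^ (S + k * Nat.choose a 2 + Nat.choose k 2)
      = (-1) ^ (Nat.choose k 2 + k * Nat.choose (a - 1) 2 + S') := by
    apply negOnePow_congr
    rw [hcs]
    omega
  calc W0 ((L.map (xt a)).prod)
      = W0 ((-1) ^ S * (L.map OX).prod) := by rw [e1]
    _ = (-1) ^ S * W0 ((L.map OX).prod) := by rw [map_mul, W0_negOnePow]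
    _ = (-1) ^ S * ((-1) ^ (k * Nat.choose a 2) * ((M.reverse.map OX).prod)) := by
        rw [e2, hrev]
    _ = (-1) ^ S * ((-1) ^ (k * Nat.choose a 2) *
          ((-1) ^ Nat.choose k 2 * (M.map OX).prod)) := by rw [e3]
    _ = (-1) ^ (S + k * Nat.choose a 2 + Nat.choose k 2) * (M.map OX).prod := by
        rw [← mul_assoc, ← mul_assoc, ← pow_add, ← pow_add]
    _ = (-1) ^ (Nat.choose k 2 + k * Nat.choose (a - 1) 2 + S') * (M.map OX).prod := by
        rw [hpar]
    _ = (-1) ^ (Nat.choose k 2 + k * Nat.choose (a - 1) 2) * ((M.map (xt a)).prod) := by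
        rw [e4, ← mul_assoc, ← pow_add]

lemma w0_eps (k : ℕ) (hk1 : 1 ≤ k) (hka : k ≤ a) :
    W0 (eps a k) = (-1 : OPol a) ^ (Nat.choose k 2 + k * Nat.choose (a - 1) 2) * eps a k := by
  have ha : 1 ≤ a := le_trans hk1 hka
  unfold eps
  rw [map_sum, Finset.mul_sum]
  refine Finset.sum_bij' (fun t _ => Finset.map (remb a) t) (fun t _ => Finset.map (remb a) t)
    ?_ ?_ ?_ ?_ ?_
  · intro t htm
    rw [Finset.mem_powersetCard_univ] at htm ⊢
    rw [Finset.card_map, htm]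
  · intro t htm
    rw [Finset.mem_powersetCard_univ] at htm ⊢
    rw [Finset.card_map, htm]
  · intro t _; exact remb_remb t
  · intro t _; exact remb_remb t
  · intro t htm
    rw [Finset.mem_powersetCard_univ] at htm
    exact W0_eps_term W0 hW0 ha t htm

end Part1
section Part2
variable {a : ℕ}

lemma xv_eq (t : ℕ) (h1 : 1 ≤ t) (h2 : t ≤ a) :
    xv a t = OX (⟨t - 1, by omega⟩ : Fin a) := by
  rw [xv, dif_pos ⟨h1, h2⟩]

lemma xv_ox (m : Fin a) : xv a ((m : ℕ) + 1) = OX m := by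
  rw [xv_eq ((m : ℕ) + 1) (by omega) m.isLt]
  simp only [Nat.add_sub_cancel, Fin.eta]

variable (s : ℕ → OPol a →+* OPol a)
  (hs : ∀ i j : ℕ, 1 ≤ i → i + 1 ≤ a → 1 ≤ j → j ≤ a →
      s i (xv a j) =
        if j = i then -xv a (i + 1) else if j = i + 1 then -xv a i else -xv a j)
  (d : ℕ → OPol a →+ OPol a)
  (hd1 : ∀ i : ℕ, 1 ≤ i → i + 1 ≤ a → d i 1 = 0)
  (hdx : ∀ i j : ℕ, 1 ≤ i → i + 1 ≤ a → 1 ≤ j → j ≤ a →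
      d i (xv a j) = if j = i ∨ j = i + 1 then 1 else 0)
  (hdL : ∀ i : ℕ, 1 ≤ i → i + 1 ≤ a → ∀ f g : OPol a,
      d i (f * g) = d i f * g + s i f * d i g)
  (W0 : OPol a →+* OPol a)
  (hW0 : ∀ i : Fin a, W0 (OX i) = (-1 : OPol a) ^ Nat.choose a 2 * OX (Fin.rev i))

include hd1 in
lemma d_negOnePow (i : ℕ) (h1 : 1 ≤ i) (h2 : i + 1 ≤ a) (n : ℕ) :
    d i ((-1 : OPol a) ^ n) = 0 := by
  rcases Nat.mod_two_eq_zero_or_one n with h | h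
  · rw [negOnePow_mod, h, pow_zero]
    exact hd1 i h1 h2
  · rw [negOnePow_mod, h, pow_one]
    have h2' := map_neg (d i) (1 : OPol a)
    rw [h2', hd1 i h1 h2]
    exact neg_zero

include hd1 in
lemma d_intCast (i : ℕ) (h1 : 1 ≤ i) (h2 : i + 1 ≤ a) (n : ℤ) :
    d i ((n : ℤ) : OPol a) = 0 := by
  have hcast : ((n : ℤ) : OPol a) = n • (1 : OPol a) := by
    rw [zsmul_eq_mul, mul_one]
  rw [hcast, map_zsmul, hd1 i h1 h2]
  exact smul_zero n

include hs in
lemma s_ox (i : ℕ) (h1 : 1 ≤ i) (h2 : i + 1 ≤ a) (m : Fin a) :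
    s i (OX m) =
      if (m : ℕ) + 1 = i then -OX (⟨i, by omega⟩ : Fin a)
      else if (m : ℕ) = i then -OX (⟨i - 1, by omega⟩ : Fin a)
      else -OX m := by
  have h := hs i ((m : ℕ) + 1) h1 h2 (by omega) m.isLt
  rw [xv_ox] at h
  rw [h]
  by_cases hm1 : (m : ℕ) + 1 = i
  · rw [if_pos hm1, if_pos hm1, xv_eq (i + 1) (by omega) (by omega)]
    simp only [Nat.add_sub_cancel]
  · rw [if_neg hm1, if_neg hm1]
    by_cases hm2 : (m : ℕ) = i
    · rw [if_pos (by omega), if_pos hm2, xv_eq i h1 (by omega)]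
    · rw [if_neg (by omega), if_neg hm2]

include hdx in
lemma d_ox (i : ℕ) (h1 : 1 ≤ i) (h2 : i + 1 ≤ a) (m : Fin a) :
    d i (OX m) = if (m : ℕ) + 1 = i ∨ (m : ℕ) = i then 1 else 0 := by
  have h := hdx i ((m : ℕ) + 1) h1 h2 (by omega) m.isLt
  rw [xv_ox] at h
  rw [h]
  exact if_congr (by omega) rfl rfl

include hs hW0 in
lemma sW0_ox (i : ℕ) (h1 : 1 ≤ i) (h2 : i + 1 ≤ a) (j : Fin a) :
    s i (W0 (OX j)) = W0 (s (a - i) (OX j)) := by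
  have hrev : (Fin.rev j : ℕ) = a - 1 - (j : ℕ) := by
    rw [Fin.val_rev]; omega
  have hja := j.isLt
  have hWn : ∀ x : OPol a, W0 (-x) = -W0 x := fun x => map_neg W0 x
  have key : ∀ u v : Fin a, Fin.rev v = u →
      (-1 : OPol a) ^ Nat.choose a 2 * -OX u = W0 (-OX v) := by
    intro u v huv
    rw [hWn, hW0, huv, mn]
  rw [hW0 j, map_mul, W0_negOnePow, s_ox s hs i h1 h2 (Fin.rev j),
    s_ox s hs (a - i) (by omega) (by omega) j]
  by_cases hc1 : (j : ℕ) = a - i - 1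
  · rw [if_neg (by omega), if_pos (by omega), if_pos (by omega)]
    exact key _ _ (Fin.ext (by rw [Fin.val_rev]; simp only []; omega))
  · by_cases hc2 : (j : ℕ) = a - i
    · rw [if_pos (by omega), if_neg (by omega), if_pos (by omega)]
      exact key _ _ (Fin.ext (by rw [Fin.val_rev]; simp only []; omega))
    · rw [if_neg (by omega), if_neg (by omega), if_neg (by omega), if_neg (by omega)]
      exact key _ _ rfl

include hs hW0 in
lemma sW0 (i : ℕ) (h1 : 1 ≤ i) (h2 : i + 1 ≤ a) (f : OPol a) :
    s i (W0 f) = W0 (s (a - i) f) := by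
  induction f using opol_induction with
  | hint n => rw [map_intCast, map_intCast, map_intCast, map_intCast]
  | hx j => exact sW0_ox s hs W0 hW0 i h1 h2 j
  | hadd f g hf hg => rw [map_add, map_add, hf, hg, map_add, map_add]
  | hmul f g hf hg => rw [map_mul, map_mul, hf, hg, map_mul, map_mul]

include hs hd1 hdx hdL hW0 in
lemma dW0 (i : ℕ) (h1 : 1 ≤ i) (h2 : i + 1 ≤ a) (f : OPol a) :
    d i (W0 f) = (-1 : OPol a) ^ Nat.choose a 2 * W0 (d (a - i) f) := by
  have h1' : 1 ≤ a - i := by omega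
  have h2' : (a - i) + 1 ≤ a := by omega
  induction f using opol_induction with
  | hint n =>
    rw [map_intCast, d_intCast d hd1 i h1 h2, d_intCast d hd1 (a - i) h1' h2',
      map_zero, mul_zero]
  | hx j =>
    have hja := j.isLt
    have hcond : ((Fin.rev j : ℕ) + 1 = i ∨ (Fin.rev j : ℕ) = i) ↔
        ((j : ℕ) + 1 = a - i ∨ (j : ℕ) = a - i) := by
      rw [Fin.val_rev]; omega
    rw [hW0 j, hdL i h1 h2 ((-1 : OPol a) ^ Nat.choose a 2) (OX (Fin.rev j)),
      d_negOnePow d hd1 i h1 h2, zero_mul, zero_add,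
      W0_negOnePow (s i), d_ox d hdx i h1 h2 (Fin.rev j),
      d_ox d hdx (a - i) h1' h2' j]
    by_cases hc : (j : ℕ) + 1 = a - i ∨ (j : ℕ) = a - i
    · rw [if_pos hc, if_pos (hcond.mpr hc), map_one, mul_one]
    · rw [if_neg hc, if_neg (fun h => hc (hcond.mp h)), map_zero, mul_zero]
  | hadd f g hf hg =>
    rw [map_add, map_add, hf, hg, map_add, map_add, mul_add]
  | hmul f g hf hg =>
    rw [map_mul, hdL i h1 h2 (W0 f) (W0 g), hf, hg, sW0 s hs W0 hW0 i h1 h2 f,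
      hdL (a - i) h1' h2' f g, map_add, map_mul, map_mul, mul_add,
      mul_assoc, mul_negOnePow_mul]

include hW0 in
lemma W0_invol (f : OPol a) : W0 (W0 f) = f := by
  induction f using opol_induction with
  | hint n => rw [map_intCast, map_intCast]
  | hx j =>
    rw [hW0 j, map_mul, W0_negOnePow, hW0 (Fin.rev j), Fin.rev_rev,
      ← mul_assoc, ← pow_add,
      negOnePow_congr (by omega : (Nat.choose a 2 + Nat.choose a 2) % 2 = 0 % 2),
      pow_zero, one_mul]
  | hadd f g hf hg => rw [map_add, map_add, hf, hg]
  | hmul f g hf hg => rw [map_mul, map_mul, hf, hg]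

end Part2
/-- the longest element w₀ acts on ε_k by the sign
(−1)^{C(k,2)+k·C(a−1,2)}, and maps OΛ_a onto itself. -/
theorem w0_action_on_odd_elementary (a : ℕ)
    (s : ℕ → OPol a →+* OPol a)
    (hs : ∀ i j : ℕ, 1 ≤ i → i + 1 ≤ a → 1 ≤ j → j ≤ a →
      s i (xv a j) =
        if j = i then -xv a (i + 1) else if j = i + 1 then -xv a i else -xv a j)
    (d : ℕ → OPol a →+ OPol a)
    (hd1 : ∀ i : ℕ, 1 ≤ i → i + 1 ≤ a → d i 1 = 0)
    (hdx : ∀ i j : ℕ, 1 ≤ i → i + 1 ≤ a → 1 ≤ j → j ≤ a →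
      d i (xv a j) = if j = i ∨ j = i + 1 then 1 else 0)
    (hdL : ∀ i : ℕ, 1 ≤ i → i + 1 ≤ a → ∀ f g : OPol a,
      d i (f * g) = d i f * g + s i f * d i g)
    (W0 : OPol a →+* OPol a)
    (hW0 : ∀ i : Fin a, W0 (OX i) = (-1 : OPol a) ^ Nat.choose a 2 * OX (Fin.rev i)) :
    (∀ k : ℕ, 1 ≤ k → k ≤ a →
      W0 (eps a k) =
        (-1 : OPol a) ^ (Nat.choose k 2 + k * Nat.choose (a - 1) 2) * eps a k) ∧
    W0 '' {f : OPol a | ∀ i : ℕ, 1 ≤ i → i + 1 ≤ a → d i f = 0} =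
      {f : OPol a | ∀ i : ℕ, 1 ≤ i → i + 1 ≤ a → d i f = 0} := by
    constructor
    · exact fun k hk1 hka => w0_eps W0 hW0 k hk1 hka
    · have hsub : ∀ f : OPol a, (∀ i : ℕ, 1 ≤ i → i + 1 ≤ a → d i f = 0) →
          (∀ i : ℕ, 1 ≤ i → i + 1 ≤ a → d i (W0 f) = 0) := by
        intro f hf i hi1 hi2
        rw [dW0 s hs d hd1 hdx hdL W0 hW0 i hi1 hi2 f,
          hf (a - i) (by omega) (by omega), map_zero, mul_zero]
      ext g
      simp only [Set.mem_image, Set.mem_setOf_eq]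
      constructor
      · rintro ⟨f, hf, rfl⟩
        exact hsub f hf
      · intro hg
        exact ⟨W0 g, hsub g hg, W0_invol W0 hW0 g⟩
end
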